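/- arXiv:0809.1546 — 4 statements merged into one kernel-verified Lean document; each statement's English description precedes it below -/
import Mathlib

section
/- Let n ≥ 1 and let (γ_m) be a sequence of pairwise distinct elements of PSL(n+1,ℂ). Then there exist a subsequence of (γ_m) and a quasi-projective map γ of ℙⁿ_ℂ such that the subsequence converges to γ in the sense of quasi-projective transformations, i.e., uniformly on compact subsets of ℙⁿ_ℂ ∖ Ker(γ). -/
open Filter Topology Matrix

noncomputable section

abbrev Vec (n : ℕ) := Fin (n + 1) → ℂ
abbrev Mat (n : ℕ) := Matrix (Fin (n + 1)) (Fin (n + 1)) ℂ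
abbrev Pn (n : ℕ) := Projectivization ℂ (Vec n)

instance (n : ℕ) : TopologicalSpace (Pn n) :=
  inferInstanceAs (TopologicalSpace (Quotient (projectivizationSetoid ℂ (Vec n))))

def herm (n : ℕ) (u v : Vec n) : ℂ :=
  -(u 0 * (starRingEnd ℂ) (v 0)) + ∑ j : Fin n, u j.succ * (starRingEnd ℂ) (v j.succ)

def Hball (n : ℕ) : Set (Pn n) :=
  {p | ∃ v : Vec n, ∃ hv : v ≠ 0, p = Projectivization.mk ℂ v hv ∧ (herm n v v).re < 0}

def Hbdry (n : ℕ) : Set (Pn n) :=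
  {p | ∃ v : Vec n, ∃ hv : v ≠ 0, p = Projectivization.mk ℂ v hv ∧ herm n v v = 0}

abbrev GLn (n : ℕ) := Matrix.GeneralLinearGroup (Fin (n + 1)) ℂ
abbrev PGLn (n : ℕ) := GLn n ⧸ Subgroup.center (GLn n)

lemma glInj {n : ℕ} (A : GLn n) : Function.Injective (Matrix.mulVecLin (A : Mat n)) := by
  intro x y h
  simp only [Matrix.mulVecLin_apply] at h
  have h2 : ((A⁻¹ : GLn n) : Mat n) *ᵥ ((A : Mat n) *ᵥ x)
      = ((A⁻¹ : GLn n) : Mat n) *ᵥ ((A : Mat n) *ᵥ y) := by rw [h]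
  rwa [Matrix.mulVec_mulVec, Matrix.mulVec_mulVec, Units.inv_mul, Matrix.one_mulVec,
    Matrix.one_mulVec] at h2

def actGL {n : ℕ} (A : GLn n) : Pn n → Pn n :=
  Projectivization.map (Matrix.mulVecLin (A : Mat n)) (glInj A)

def act {n : ℕ} (g : PGLn n) : Pn n → Pn n := actGL (Quotient.out g)

-- part 2 --

/-- The subset `U(1,n)` of `GL(n+1,ℂ)`: matrices preserving the Hermitian form. -/
def unitaryGL (n : ℕ) : Set (GLn n) :=
  {A | ∀ u v : Vec n, herm n ((A : Mat n) *ᵥ u) ((A : Mat n) *ᵥ v) = herm n u v}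

/-- `PU(1,n)`, the image of `U(1,n)` in `PGL(n+1,ℂ)`. -/
def PUset (n : ℕ) : Set (PGLn n) := (QuotientGroup.mk : GLn n → PGLn n) '' unitaryGL n

/-- The center of the ball `𝐇ⁿ_ℂ`, namely the image of `(1,0,…,0)`. -/
def basePt (n : ℕ) : Pn n :=
  Projectivization.mk ℂ (Pi.single 0 1) (by
    intro h
    have := congrFun h 0
    simp [Pi.single_eq_same] at this)

lemma basePt_mem_Hball (n : ℕ) : basePt n ∈ Hball n := by
  refine ⟨Pi.single 0 1, _, rfl, ?_⟩
  have : herm n (Pi.single 0 1) (Pi.single 0 1) = -1 := by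
    simp [herm, Pi.single_eq_same, Pi.single_eq_of_ne (Fin.succ_ne_zero _)]
  rw [this]
  norm_num

/-- The set of accumulation points of the orbit `G • x` in `ℙⁿ_ℂ`: limits of
`g_m • x` along sequences of pairwise distinct elements of `G`. -/
def accPts {n : ℕ} (G : Subgroup (PGLn n)) (x : Pn n) : Set (Pn n) :=
  {z | ∃ g : ℕ → G, Function.Injective g ∧
    Tendsto (fun m => act (g m : PGLn n) x) atTop (𝓝 z)}

/-- The Chen–Greenberg limit set of `G`. -/
def LambdaCG {n : ℕ} (G : Subgroup (PGLn n)) : Set (Pn n) := accPts G (basePt n)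

/-- Uniform convergence on `K` of a sequence of self-maps of `ℙⁿ_ℂ` to `F`, expressed
via open neighborhoods of the diagonal.  Since `ℙⁿ_ℂ` is compact Hausdorff, this is
equivalent to uniform convergence on `K` with respect to any metric inducing its
topology. -/
def UnifConvOn {n : ℕ} (f : ℕ → Pn n → Pn n) (F : Pn n → Pn n) (K : Set (Pn n)) : Prop :=
  ∀ W : Set (Pn n × Pn n), IsOpen W → (∀ y, (y, y) ∈ W) →
    ∀ᶠ m in atTop, ∀ x ∈ K, (F x, f m x) ∈ W

/-- Uniform convergence on all compact subsets of `S`. -/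
def UnifConvOnCompacts {n : ℕ} (f : ℕ → Pn n → Pn n) (F : Pn n → Pn n)
    (S : Set (Pn n)) : Prop :=
  ∀ K ⊆ S, IsCompact K → UnifConvOn f F K

/-- The equicontinuity region of a subgroup `G ≤ PGL(n+1,ℂ)`: points having an open
neighborhood `U` on which every sequence in `G` has a subsequence converging uniformly
on compact subsets of `U`. -/
def eqRegion {n : ℕ} (G : Subgroup (PGLn n)) : Set (Pn n) :=
  {z | ∃ U : Set (Pn n), IsOpen U ∧ z ∈ U ∧
    ∀ g : ℕ → G, ∃ φ : ℕ → ℕ, StrictMono φ ∧ ∃ F : Pn n → Pn n,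
      UnifConvOnCompacts (fun m => act (g (φ m) : PGLn n)) F U}

/-- The equicontinuity region of the family of maps `{f m : m ∈ ℕ}`. -/
def eqRegionFam {n : ℕ} (f : ℕ → Pn n → Pn n) : Set (Pn n) :=
  {z | ∃ U : Set (Pn n), IsOpen U ∧ z ∈ U ∧
    ∀ s : ℕ → ℕ, ∃ φ : ℕ → ℕ, StrictMono φ ∧ ∃ F : Pn n → Pn n,
      UnifConvOnCompacts (fun k => f (s (φ k))) F U}

/-- The projectivization of a linear subspace `W ⊆ ℂ^{n+1}`, as a subset of `ℙⁿ_ℂ`. -/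
def projSet {n : ℕ} (W : Submodule ℂ (Vec n)) : Set (Pn n) := {p | p.rep ∈ W}

/-- A complex projective hyperplane: the projectivization of an `n`-dimensional
subspace of `ℂ^{n+1}`. -/
def IsProjHyperplane {n : ℕ} (S : Set (Pn n)) : Prop :=
  ∃ W : Submodule ℂ (Vec n), Module.finrank ℂ W = n ∧ S = projSet W

/-- A complex projective line: the projectivization of a `2`-dimensional subspace. -/
def IsProjLine {n : ℕ} (S : Set (Pn n)) : Prop :=
  ∃ W : Submodule ℂ (Vec n), Module.finrank ℂ W = 2 ∧ S = projSet W

/-- The kernel in `ℙⁿ_ℂ` of the quasi-projective map induced by the nonzero matrix `M`. -/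
def qKer {n : ℕ} (M : Mat n) : Set (Pn n) := projSet (LinearMap.ker (Matrix.mulVecLin M))

/-- The image in `ℙⁿ_ℂ` of the quasi-projective map induced by the nonzero matrix `M`. -/
def qIm {n : ℕ} (M : Mat n) : Set (Pn n) := projSet (LinearMap.range (Matrix.mulVecLin M))

/-- The quasi-projective map `ℙⁿ_ℂ ∖ Ker(M) → ℙⁿ_ℂ` induced by the nonzero matrix `M`
(extended to all of `ℙⁿ_ℂ` by the identity on `Ker(M)`, where it is irrelevant). -/
def qMap {n : ℕ} (M : Mat n) : Pn n → Pn n := fun p =>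
  if h : M *ᵥ p.rep ≠ 0 then Projectivization.mk ℂ (M *ᵥ p.rep) h else p

/-- Convergence of a sequence of transformations of `ℙⁿ_ℂ` to the quasi-projective map
induced by `M`, in the sense of quasi-projective transformations: uniform convergence
on compact subsets of `ℙⁿ_ℂ ∖ Ker(M)`. -/
def QPConv {n : ℕ} (f : ℕ → Pn n → Pn n) (M : Mat n) : Prop :=
  UnifConvOnCompacts f (qMap M) (qKer M)ᶜ

/-- The special linear group `SL(n+1,ℂ)`. -/
abbrev SLn (n : ℕ) := Matrix.SpecialLinearGroup (Fin (n + 1)) ℂ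

/-- The projective special linear group `PSL(n+1,ℂ) = SL(n+1,ℂ)/center`. -/
abbrev PSLn (n : ℕ) := SLn n ⧸ Subgroup.center (SLn n)

/-- The projective transformation induced by an element of `SL(n+1,ℂ)`. -/
def actSL {n : ℕ} (A : SLn n) : Pn n → Pn n := actGL (Matrix.SpecialLinearGroup.toGL A)

/-- The projective transformation induced by an element of `PSL(n+1,ℂ)` (via an
arbitrary representative; all representatives induce the same transformation). -/
def actPSL {n : ℕ} (g : PSLn n) : Pn n → Pn n := actSL (Quotient.out g)

/-- The projective hyperplane tangent to `∂𝐇ⁿ_ℂ` at `p`: the projectivization of the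
Hermitian orthogonal complement of a lift of `p`. -/
def tangentAt {n : ℕ} (p : Pn n) : Set (Pn n) := {q | herm n q.rep p.rep = 0}

end


noncomputable section QPAux

namespace QPAux

open Filter Topology Matrix

variable {n : ℕ}

/-- The quotient map from nonzero vectors to projective space. -/
def qp (n : ℕ) : {v : Vec n // v ≠ 0} → Pn n := fun v => Projectivization.mk ℂ v.1 v.2

lemma continuous_qp : Continuous (qp n) :=
  continuous_quotient_mk'

lemma qp_surjective : Function.Surjective (qp n) := fun p =>
  ⟨⟨p.rep, p.rep_nonzero⟩, p.mk_rep⟩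

lemma isQuotientMap_qp : IsQuotientMap (qp n) :=
  isQuotientMap_quotient_mk'

lemma isOpenMap_qp : IsOpenMap (qp n) := by
  intro U hU
  rw [← isQuotientMap_qp.isOpen_preimage]
  have heq : qp n ⁻¹' (qp n '' U) = ⋃ c : ℂˣ, (fun v : {v : Vec n // v ≠ 0} =>
      (⟨(c : ℂ) • v.1, smul_ne_zero c.ne_zero v.2⟩ : {v : Vec n // v ≠ 0})) ⁻¹' U := by
    ext v
    simp only [Set.mem_preimage, Set.mem_image, Set.mem_iUnion]
    constructor
    · rintro ⟨u, hu, huv⟩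
      obtain ⟨a, ha⟩ := (Projectivization.mk_eq_mk_iff ℂ _ _ u.2 v.2).mp huv
      refine ⟨a, ?_⟩
      have : (⟨(a : ℂ) • v.1, smul_ne_zero a.ne_zero v.2⟩ : {v : Vec n // v ≠ 0}) = u := by
        apply Subtype.ext
        simpa [Units.smul_def] using ha
      rwa [this]
    · rintro ⟨c, hc⟩
      refine ⟨_, hc, ?_⟩
      exact (Projectivization.mk_eq_mk_iff ℂ _ _ _ v.2).mpr ⟨c, by simp [Units.smul_def]⟩
  rw [heq]
  exact isOpen_iUnion fun c => hU.preimage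
    (((continuous_const_smul _).comp continuous_subtype_val).subtype_mk _)

lemma qMap_mk {M : Mat n} {v : Vec n} (hv : v ≠ 0) (h : M *ᵥ v ≠ 0) :
    qMap M (Projectivization.mk ℂ v hv) = Projectivization.mk ℂ (M *ᵥ v) h := by
  set p := Projectivization.mk ℂ v hv with hp
  obtain ⟨a, ha⟩ := (Projectivization.mk_eq_mk_iff ℂ _ _ p.rep_nonzero hv).mp p.mk_rep
  have hMr : M *ᵥ p.rep = (a : ℂ) • (M *ᵥ v) := by
    rw [← ha, Units.smul_def, Matrix.mulVec_smul]
  have hne : M *ᵥ p.rep ≠ 0 := by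
    rw [hMr]; exact smul_ne_zero a.ne_zero h
  rw [qMap, dif_pos hne]
  rw [Projectivization.mk_eq_mk_iff]
  exact ⟨a, by rw [Units.smul_def, ← hMr]⟩

lemma continuousAt_qMapPair {M : Mat n} {x : Pn n} (h : M *ᵥ x.rep ≠ 0) :
    ContinuousAt (fun P : Mat n × Pn n => qMap P.1 P.2) (M, x) := by
  set f := fun P : Mat n × Pn n => qMap P.1 P.2 with hf
  rw [ContinuousAt, (nhds_basis_opens (f (M, x))).tendsto_right_iff]
  rintro V ⟨hfV, hVopen⟩
  have hV0 : IsOpen (Subtype.val '' (qp n ⁻¹' V) : Set (Vec n)) :=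
    (isOpen_ne (x := (0 : Vec n))).isOpenMap_subtype_val _ (hVopen.preimage continuous_qp)
  set V0 : Set (Vec n) := Subtype.val '' (qp n ⁻¹' V) with hV0def
  set g := fun Nu : Mat n × {v : Vec n // v ≠ 0} => Nu.1 *ᵥ Nu.2.1 with hg
  have hgcont : Continuous g :=
    Continuous.matrix_mulVec continuous_fst (continuous_subtype_val.comp continuous_snd)
  set P : Set (Mat n × {v : Vec n // v ≠ 0}) := g ⁻¹' V0 with hP
  set O : Set (Mat n × Pn n) := Prod.map id (qp n) '' P with hO
  have hOopen : IsOpen O := (IsOpenMap.id.prodMap isOpenMap_qp) P (hV0.preimage hgcont)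
  have hfMx : f (M, x) = Projectivization.mk ℂ (M *ᵥ x.rep) h := by
    simp only [hf, qMap, dif_pos h]
  have hmem : (M, x) ∈ O := by
    refine ⟨(M, ⟨x.rep, x.rep_nonzero⟩), ?_, ?_⟩
    · refine ⟨⟨M *ᵥ x.rep, h⟩, ?_, rfl⟩
      show qp n _ ∈ V
      rw [show qp n ⟨M *ᵥ x.rep, h⟩ = f (M, x) from hfMx.symm]
      exact hfV
    · show (M, qp n ⟨x.rep, x.rep_nonzero⟩) = (M, x)
      rw [show qp n ⟨x.rep, x.rep_nonzero⟩ = x from x.mk_rep]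
  refine Filter.eventually_of_mem (hOopen.mem_nhds hmem) ?_
  rintro ⟨N, y⟩ ⟨⟨N', u⟩, hPmem, heq⟩
  obtain ⟨hN, hy⟩ : N' = N ∧ qp n u = y := by
    constructor
    · exact (congrArg Prod.fst heq)
    · exact (congrArg Prod.snd heq)
  subst hN; subst hy
  obtain ⟨w, hwV, hw⟩ := hPmem
  have hw' : (w : Vec n) = N' *ᵥ u.1 := hw
  have hne : N' *ᵥ u.1 ≠ 0 := hw' ▸ w.2
  have : f (N', qp n u) = Projectivization.mk ℂ (N' *ᵥ u.1) hne := qMap_mk u.2 hne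
  rw [this]
  have : Projectivization.mk ℂ (N' *ᵥ u.1) hne = qp n w := by
    obtain ⟨ww, hw2⟩ := w
    simp only at hw'
    subst hw'
    rfl
  rw [this]
  exact hwV

lemma mem_compl_qKer {M : Mat n} {x : Pn n} (hx : x ∈ (qKer M)ᶜ) : M *ᵥ x.rep ≠ 0 := by
  intro h0
  exact hx (by simp [qKer, projSet, Set.mem_setOf_eq, LinearMap.mem_ker,
    Matrix.mulVecLin_apply, h0])

set_option maxHeartbeats 2000000 in
lemma qpconv_of_tendsto (N : ℕ → Mat n) (M : Mat n)
    (hN : Tendsto N atTop (𝓝 M)) : QPConv (fun k => qMap (N k)) M := by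
  intro K hKsub hK W hWopen hWdiag
  by_contra hcon
  rw [Filter.not_eventually] at hcon
  simp only [] at hcon
  set S : Set ℕ := {m | ¬ ∀ x ∈ K, (qMap M x, qMap (N m) x) ∈ W} with hS
  have hFne : (atTop ⊓ 𝓟 S).NeBot := Filter.frequently_iff_neBot.mp hcon
  have hchoice : ∀ m : ℕ, ∃ x : Pn n, m ∈ S → x ∈ K ∧ (qMap M x, qMap (N m) x) ∉ W := by
    intro m
    by_cases hm : m ∈ S
    · rw [hS, Set.mem_setOf_eq] at hm
      push_neg at hm
      obtain ⟨x, hx1, hx2⟩ := hm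
      exact ⟨x, fun _ => ⟨hx1, hx2⟩⟩
    · exact ⟨basePt n, fun h => absurd h hm⟩
  choose xs hxs using hchoice
  set F := atTop ⊓ 𝓟 S with hF
  have hmapK : Filter.map xs F ≤ 𝓟 K := by
    rw [Filter.le_principal_iff, Filter.mem_map]
    exact Filter.mem_inf_of_right (fun m hm => (hxs m hm).1)
  have : (Filter.map xs F).NeBot := Filter.map_neBot_iff xs |>.mpr hFne
  obtain ⟨z, hzK, hz⟩ := hK hmapK
  set L := F ⊓ Filter.comap xs (𝓝 z) with hL
  have hLne : L.NeBot := by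
    rw [← Filter.map_neBot_iff xs]
    rw [hL, Filter.push_pull]
    rw [inf_comm]
    exact hz.neBot
  have hxz : Tendsto xs L (𝓝 z) := tendsto_comap.mono_left inf_le_right
  have hNL : Tendsto (fun m => N m) L (𝓝 M) :=
    hN.mono_left (le_trans inf_le_left inf_le_left)
  have hz0 : M *ᵥ z.rep ≠ 0 := mem_compl_qKer (hKsub hzK)
  have hpair1 : Tendsto (fun m => (N m, xs m)) L (𝓝 (M, z)) := hNL.prodMk_nhds hxz
  have hpair2 : Tendsto (fun m => (M, xs m)) L (𝓝 (M, z)) :=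
    tendsto_const_nhds.prodMk_nhds hxz
  have hT1 : Tendsto (fun m => qMap (N m) (xs m)) L (𝓝 (qMap M z)) := by
    have h := (continuousAt_qMapPair hz0).tendsto.comp hpair1
    exact h
  have hT2 : Tendsto (fun m => qMap M (xs m)) L (𝓝 (qMap M z)) := by
    have h := (continuousAt_qMapPair hz0).tendsto.comp hpair2
    exact h
  have hWmem : (qMap M z, qMap M z) ∈ W := hWdiag _
  have hev : ∀ᶠ m in L, (qMap M (xs m), qMap (N m) (xs m)) ∈ W :=
    (hT2.prodMk_nhds hT1) (hWopen.mem_nhds hWmem)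
  have hev2 : ∀ᶠ m in L, (qMap M (xs m), qMap (N m) (xs m)) ∉ W := by
    have hLS : ∀ᶠ m in L, m ∈ S :=
      Filter.le_principal_iff.mp (le_trans inf_le_left inf_le_right)
    exact hLS.mono fun m hm => (hxs m hm).2
  obtain ⟨m, h1, h2⟩ := (hev.and hev2).exists
  exact h2 h1

lemma actGL_eq_qMap (A : GLn n) (c : ℂ) (hc : c ≠ 0) :
    actGL A = qMap (c • (A : Mat n)) := by
  funext x
  have hA : (A : Mat n) *ᵥ x.rep ≠ 0 := by
    intro h0
    apply x.rep_nonzero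
    apply glInj A
    simpa [Matrix.mulVecLin_apply] using h0
  have hcA : (c • (A : Mat n)) *ᵥ x.rep ≠ 0 := by
    rw [Matrix.smul_mulVec]
    exact smul_ne_zero hc hA
  conv_lhs => rw [← x.mk_rep]
  rw [actGL, Projectivization.map_mk]
  rw [qMap, dif_pos hcA]
  rw [Projectivization.mk_eq_mk_iff]
  refine ⟨(Units.mk0 c hc)⁻¹, ?_⟩
  rw [Units.smul_def, Matrix.smul_mulVec, smul_smul]
  simp [Matrix.mulVecLin_apply, inv_mul_cancel₀ hc]

end QPAux

end QPAux

/-- Every sequence of pairwise distinct elements of `PSL(n+1,ℂ)` has a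
subsequence converging, in the sense of quasi-projective transformations, to the
quasi-projective map induced by some nonzero linear map of `ℂ^{n+1}`. -/
theorem exists_subseq_qp_convergence
    (n : ℕ) (hn : 1 ≤ n) (γ : ℕ → PSLn n) (hγ : Function.Injective γ) :
    ∃ φ : ℕ → ℕ, StrictMono φ ∧ ∃ M : Mat n, M ≠ 0 ∧
      QPConv (fun k => actPSL (γ (φ k))) M := by
  classical
  set A : ℕ → Mat n := fun m => ((Quotient.out (γ m) : SLn n) : Mat n) with hA
  have hAne : ∀ m, A m ≠ 0 := by
    intro m h0
    have hdet : (A m).det = 1 := (Quotient.out (γ m)).prop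
    rw [h0, Matrix.det_zero] at hdet
    exact zero_ne_one hdet
  set u : ℕ → (Fin (n + 1) → Fin (n + 1) → ℂ) := fun m i j => A m i j with hu
  have hune : ∀ m, u m ≠ 0 := by
    intro m h0
    apply hAne m
    ext i j
    have := congrFun (congrFun h0 i) j
    exact this
  set c : ℕ → ℝ := fun m => ‖u m‖⁻¹ with hc
  have hcpos : ∀ m, 0 < c m := fun m =>
    inv_pos.mpr (norm_pos_iff.mpr (hune m))
  set b : ℕ → (Fin (n + 1) → Fin (n + 1) → ℂ) := fun m => ((c m : ℂ)) • u m with hb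
  have hbmem : ∀ m, b m ∈ Metric.sphere (0 : Fin (n + 1) → Fin (n + 1) → ℂ) 1 := by
    intro m
    rw [mem_sphere_zero_iff_norm]
    rw [hb]
    simp only [norm_smul, Complex.norm_real, Real.norm_eq_abs]
    rw [abs_of_pos (hcpos m), hc]
    exact inv_mul_cancel₀ (norm_ne_zero_iff.mpr (hune m))
  obtain ⟨M0, hM0, φ, hφ, hconv⟩ := (isCompact_sphere
    (0 : Fin (n + 1) → Fin (n + 1) → ℂ) 1).tendsto_subseq hbmem
  have hM0ne : M0 ≠ 0 := by
    intro h0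
    rw [h0, mem_sphere_zero_iff_norm, norm_zero] at hM0
    exact zero_ne_one hM0
  set M : Mat n := Matrix.of M0 with hM
  have hMne : M ≠ 0 := by
    intro h0
    apply hM0ne
    ext i j
    exact congrFun (congrFun h0 i) j
  set Nn : ℕ → Mat n := fun m => ((c m : ℂ)) • A m with hNn
  have htend : Tendsto (fun k => Nn (φ k)) atTop (𝓝 M) := by
    apply tendsto_pi_nhds.mpr
    intro i
    apply tendsto_pi_nhds.mpr
    intro j
    have h := (((continuous_apply j).comp (continuous_apply i)).tendsto M0).comp hconv
    exact h
  refine ⟨φ, hφ, M, hMne, ?_⟩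
  have hfun : (fun k => actPSL (γ (φ k))) = fun k => qMap (Nn (φ k)) := by
    funext k
    have hcc : ((c (φ k) : ℂ)) ≠ 0 := by
      simpa using (hcpos (φ k)).ne'
    have := QPAux.actGL_eq_qMap (Matrix.SpecialLinearGroup.toGL
      (Quotient.out (γ (φ k)))) ((c (φ k) : ℂ)) hcc
    exact this
  rw [hfun]
  exact QPAux.qpconv_of_tendsto _ _ htend
end

section
/- Let n ≥ 1 and let (γ_m) be a sequence in PSL(n+1,ℂ) converging in the sense of quasi-projective transformations to a quasi-projective map γ whose kernel Ker(γ) is a complex projective hyperplane. Then the equicontinuity region of the family {γ_m : m ∈ ℕ} equals ℙⁿ_ℂ ∖ Ker(γ). -/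
open Filter Topology Matrix

noncomputable section Aux
namespace EqProof
open Projectivization

variable {n : ℕ}

abbrev Sn (n : ℕ) := {v : Vec n // v ≠ 0}

def q (n : ℕ) : Sn n → Pn n := Quotient.mk''

lemma q_eq (v : Sn n) : q n v = Projectivization.mk ℂ v.1 v.2 := rfl

lemma q_cont : Continuous (q n) := continuous_quotient_mk'

lemma q_surj : Function.Surjective (q n) := Quotient.mk''_surjective

lemma q_isQuotientMap : IsQuotientMap (q n) := isQuotientMap_quotient_mk'

lemma q_eq_iff (a b : Sn n) : q n a = q n b ↔ ∃ c : ℂˣ, c • (b : Vec n) = (a : Vec n) :=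
  Quotient.eq''

/-- scalar multiplication on nonzero vectors -/
def mulS (c : ℂˣ) (v : Sn n) : Sn n :=
  ⟨(c : ℂ) • v.1, by simp [smul_eq_zero_iff_eq, v.2, Units.smul_def]⟩

lemma mulS_cont (c : ℂˣ) : Continuous (mulS (n := n) c) := by
  apply Continuous.subtype_mk
  exact (continuous_subtype_val.const_smul (c : ℂ))

lemma q_isOpenMap : IsOpenMap (q n) := by
  intro U hU
  rw [← q_isQuotientMap.isOpen_preimage]
  have : q n ⁻¹' (q n '' U) = ⋃ c : ℂˣ, mulS c '' U := by
    ext a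
    simp only [Set.mem_preimage, Set.mem_image, Set.mem_iUnion]
    constructor
    · rintro ⟨b, hb, hq⟩
      rcases (q_eq_iff a b).1 hq.symm with ⟨c, hc⟩
      exact ⟨c, b, hb, Subtype.ext (by simpa [mulS, Units.smul_def] using hc)⟩
    · rintro ⟨c, b, hb, rfl⟩
      refine ⟨b, hb, ((q_eq_iff _ _).2 ⟨c, ?_⟩).symm⟩
      simp [mulS, Units.smul_def]
  rw [this]
  exact isOpen_iUnion fun c =>
    ((Homeomorph.mk ⟨mulS c, mulS c⁻¹, fun v => Subtype.ext (by simp [mulS, Units.smul_def]),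
      fun v => Subtype.ext (by simp [mulS, Units.smul_def])⟩ (mulS_cont c) (mulS_cont c⁻¹)).isOpenMap) U hU

lemma rep_smul_eq (v : Vec n) (hv : v ≠ 0) :
    ∃ c : ℂˣ, c • v = (Projectivization.mk ℂ v hv).rep :=
  Projectivization.exists_smul_eq_mk_rep ℂ v hv

lemma rep_mem_iff (W : Submodule ℂ (Vec n)) (v : Vec n) (hv : v ≠ 0) :
    (Projectivization.mk ℂ v hv).rep ∈ W ↔ v ∈ W := by
  rcases rep_smul_eq v hv with ⟨c, hc⟩
  rw [← hc]
  exact W.smul_mem_iff' c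

lemma mem_projSet_iff (W : Submodule ℂ (Vec n)) (v : Vec n) (hv : v ≠ 0) :
    Projectivization.mk ℂ v hv ∈ projSet W ↔ v ∈ W := rep_mem_iff W v hv

lemma isClosed_projSet (W : Submodule ℂ (Vec n)) : IsClosed (projSet W) := by
  rw [← q_isQuotientMap.isClosed_preimage]
  have h : q n ⁻¹' projSet W = Subtype.val ⁻¹' (W : Set (Vec n)) := by
    ext v
    simpa [q_eq] using mem_projSet_iff W v.1 v.2
  rw [h]
  exact (W.closed_of_finiteDimensional).preimage continuous_subtype_val

lemma rel_iff_minors (a b : Sn n) :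
    q n a = q n b ↔ ∀ i j, (a : Vec n) i * (b : Vec n) j = (a : Vec n) j * (b : Vec n) i := by
  rw [q_eq_iff]
  constructor
  · rintro ⟨c, hc⟩ i j
    have hi := congrFun hc i
    have hj := congrFun hc j
    simp only [Pi.smul_apply, Units.smul_def, smul_eq_mul] at hi hj
    rw [← hi, ← hj]; ring
  · intro h
    obtain ⟨i0, hi0⟩ : ∃ i0, (a : Vec n) i0 ≠ 0 := by
      by_contra hc
      push_neg at hc
      exact a.2 (funext hc)
    set k : ℂ := (b : Vec n) i0 / (a : Vec n) i0 with hk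
    have hb : (b : Vec n) = k • (a : Vec n) := by
      funext j
      have := h j i0
      rw [Pi.smul_apply, smul_eq_mul, hk, div_mul_eq_mul_div, eq_div_iff hi0]
      rw [mul_comm ((b:Vec n) j) _, ← this]; ring
    have hk0 : k ≠ 0 := by
      intro h0
      rw [h0, zero_smul] at hb
      exact b.2 hb
    refine ⟨(Units.mk0 k hk0)⁻¹, ?_⟩
    rw [hb]
    simp [Units.smul_def, smul_smul, inv_mul_cancel₀ hk0]

instance : T2Space (Pn n) := by
  rw [t2_iff_isClosed_diagonal]
  have hq : IsQuotientMap (Prod.map (q n) (q n)) :=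
    (q_isOpenMap.prodMap q_isOpenMap).isQuotientMap (q_cont.prodMap q_cont)
      (q_surj.prodMap q_surj)
  rw [← hq.isClosed_preimage]
  have h : Prod.map (q n) (q n) ⁻¹' (Set.diagonal (Pn n)) =
      ⋂ ij : Fin (n+1) × Fin (n+1),
        {p : Sn n × Sn n |
          (p.1 : Vec n) ij.1 * (p.2 : Vec n) ij.2 = (p.1 : Vec n) ij.2 * (p.2 : Vec n) ij.1} := by
    ext p
    simp only [Set.mem_preimage, Prod.map_apply, Set.mem_diagonal_iff, Set.mem_iInter,
      Set.mem_setOf_eq, Prod.forall]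
    show q n p.1 = q n p.2 ↔ _
    rw [rel_iff_minors]
  rw [h]
  refine isClosed_iInter fun ij => isClosed_eq ?_ ?_
  · exact (((continuous_apply ij.1).comp (continuous_subtype_val.comp continuous_fst)).mul
      ((continuous_apply ij.2).comp (continuous_subtype_val.comp continuous_snd)))
  · exact (((continuous_apply ij.2).comp (continuous_subtype_val.comp continuous_fst)).mul
      ((continuous_apply ij.1).comp (continuous_subtype_val.comp continuous_snd)))

instance : CompactSpace (Pn n) := by
  constructor
  have h1 : IsCompact (Metric.sphere (0 : Vec n) 1) := isCompact_sphere _ _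
  have h2 : IsCompact (Subtype.val ⁻¹' Metric.sphere (0 : Vec n) 1 : Set (Sn n)) := by
    rw [Topology.IsEmbedding.subtypeVal.isCompact_iff]
    have : Subtype.val '' (Subtype.val ⁻¹' Metric.sphere (0 : Vec n) 1 : Set (Sn n))
        = Metric.sphere (0 : Vec n) 1 := by
      rw [Set.image_preimage_eq_inter_range, Set.inter_eq_left]
      intro v hv
      simp only [Metric.mem_sphere, dist_zero_right] at hv
      simp only [Subtype.range_coe_subtype, Set.mem_setOf_eq]
      intro h0
      rw [h0] at hv; simp at hv
    rw [this]; exact h1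
  have h3 := h2.image q_cont
  have h4 : Set.univ ⊆ q n '' (Subtype.val ⁻¹' Metric.sphere (0 : Vec n) 1) := by
    intro p _
    have hrep := p.rep_nonzero
    have hnorm : ‖p.rep‖ ≠ 0 := norm_ne_zero_iff.mpr hrep
    set r : ℂ := (‖p.rep‖ : ℂ)⁻¹ with hr
    have hr0 : r ≠ 0 := by
      simp [hr, hnorm]
    have hv0 : r • p.rep ≠ 0 := smul_ne_zero hr0 hrep
    refine ⟨⟨r • p.rep, hv0⟩, ?_, ?_⟩
    · simp only [Set.mem_preimage, Metric.mem_sphere, dist_zero_right]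
      rw [norm_smul, hr, norm_inv]
      simp [hnorm]
    · rw [q_eq]
      conv_rhs => rw [← p.mk_rep]
      rw [Projectivization.mk_eq_mk_iff' ℂ _ _ hv0 p.rep_nonzero]
      exact ⟨r, rfl⟩
  have h5 : q n '' (Subtype.val ⁻¹' Metric.sphere (0 : Vec n) 1) = Set.univ :=
    Set.eq_univ_of_univ_subset h4
  rw [← h5]; exact h3

lemma isCompact_projSet (W : Submodule ℂ (Vec n)) : IsCompact (projSet W) := by
  have hC : IsCompact (Subtype.val ⁻¹' ((W : Set (Vec n)) ∩ Metric.sphere 0 1) : Set (Sn n)) := by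
    rw [Topology.IsEmbedding.subtypeVal.isCompact_iff]
    have himg : Subtype.val ''
        (Subtype.val ⁻¹' ((W : Set (Vec n)) ∩ Metric.sphere 0 1) : Set (Sn n))
        = (W : Set (Vec n)) ∩ Metric.sphere 0 1 := by
      rw [Set.image_preimage_eq_inter_range, Set.inter_eq_left]
      rintro v ⟨-, hv⟩
      simp only [Metric.mem_sphere, dist_zero_right] at hv
      simp only [Subtype.range_coe_subtype, Set.mem_setOf_eq]
      intro h0; rw [h0] at hv; simp at hv
    rw [himg]
    exact ((isCompact_sphere _ _).inter_left W.closed_of_finiteDimensional)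
  have heq : projSet W
      = q n '' (Subtype.val ⁻¹' ((W : Set (Vec n)) ∩ Metric.sphere 0 1)) := by
    ext p
    constructor
    · intro hp
      have hrep := p.rep_nonzero
      have hnorm : ‖p.rep‖ ≠ 0 := norm_ne_zero_iff.mpr hrep
      set r : ℂ := (‖p.rep‖ : ℂ)⁻¹ with hr
      have hr0 : r ≠ 0 := by simp [hr, hnorm]
      have hv0 : r • p.rep ≠ 0 := smul_ne_zero hr0 hrep
      refine ⟨⟨r • p.rep, hv0⟩, ⟨W.smul_mem r hp, ?_⟩, ?_⟩
      · simp only [Set.mem_preimage, Metric.mem_sphere, dist_zero_right]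
        rw [norm_smul, hr, norm_inv]
        simp [hnorm]
      · rw [q_eq]
        conv_rhs => rw [← p.mk_rep]
        rw [Projectivization.mk_eq_mk_iff' ℂ _ _ hv0 p.rep_nonzero]
        exact ⟨r, rfl⟩
    · rintro ⟨⟨v, hv⟩, ⟨hvW, -⟩, rfl⟩
      rw [q_eq]
      exact (mem_projSet_iff W v hv).2 hvW
  rw [heq]
  exact hC.image q_cont

lemma projSet_inj {W1 W2 : Submodule ℂ (Vec n)} (h : projSet W1 = projSet W2) : W1 = W2 := by
  have key : ∀ W1' W2' : Submodule ℂ (Vec n), projSet W1' = projSet W2' → W1' ≤ W2' := by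
    intro W1' W2' h' v hv
    by_cases h0 : v = 0
    · rw [h0]; exact W2'.zero_mem
    · have := (mem_projSet_iff W1' v h0).2 hv
      rw [h'] at this
      exact (mem_projSet_iff W2' v h0).1 this
  exact le_antisymm (key _ _ h) (key _ _ h.symm)

lemma tendsto_of_entourage {g : ℕ → Pn n} {a : Pn n}
    (h : ∀ W : Set (Pn n × Pn n), IsOpen W → (∀ y, (y, y) ∈ W) →
      ∀ᶠ k in atTop, (a, g k) ∈ W) :
    Tendsto g atTop (𝓝 a) := by
  rw [tendsto_nhds]
  intro V hV haV
  set W := (V ×ˢ V) ∪ (({a}ᶜ : Set (Pn n)) ×ˢ (Set.univ : Set (Pn n))) with hWdef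
  have hW : IsOpen W :=
    (hV.prod hV).union ((isClosed_singleton.isOpen_compl).prod isOpen_univ)
  have hdiag : ∀ y, (y, y) ∈ W := by
    intro y
    by_cases hy : y = a
    · exact Or.inl ⟨hy ▸ haV, hy ▸ haV⟩
    · exact Or.inr ⟨hy, trivial⟩
  filter_upwards [h W hW hdiag] with k hk
  rcases hk with ⟨-, hg⟩ | ⟨ha, -⟩
  · exact hg
  · exact absurd rfl ha

lemma exists_functional (u w : Vec n) (hu : u ≠ 0) (hw : w ≠ 0) :
    ∃ f : Vec n →ₗ[ℂ] ℂ, f u ≠ 0 ∧ f w ≠ 0 := by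
  obtain ⟨i, hi⟩ : ∃ i, u i ≠ 0 := by
    by_contra hc; push_neg at hc; exact hu (funext hc)
  obtain ⟨j, hj⟩ : ∃ j, w j ≠ 0 := by
    by_contra hc; push_neg at hc; exact hw (funext hc)
  by_cases h1 : w i ≠ 0
  · exact ⟨LinearMap.proj i, hi, h1⟩
  · push_neg at h1
    by_cases h2 : u j ≠ 0
    · exact ⟨LinearMap.proj j, h2, hj⟩
    · push_neg at h2
      refine ⟨(LinearMap.proj (R := ℂ) (φ := fun _ : Fin (n+1) => ℂ) i)
        + (LinearMap.proj (R := ℂ) (φ := fun _ : Fin (n+1) => ℂ) j), ?_, ?_⟩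
      · simpa [h2] using hi
      · simpa [h1] using hj

lemma finrank_ker_functional (f : Vec n →ₗ[ℂ] ℂ) (u : Vec n) (hfu : f u ≠ 0) :
    Module.finrank ℂ (LinearMap.ker f) = n := by
  have hsurj : Function.Surjective f := by
    intro c
    exact ⟨(c / f u) • u, by rw [LinearMap.map_smul, smul_eq_mul, div_mul_cancel₀ _ hfu]⟩
  have hrange : LinearMap.range f = ⊤ := LinearMap.range_eq_top.2 hsurj
  have := LinearMap.finrank_range_add_finrank_ker f
  rw [hrange, finrank_top, Module.finrank_self, Module.finrank_fin_fun] at this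
  omega

lemma line_meets_hyperplane (L : Submodule ℂ (Vec n)) (hL : Module.finrank ℂ L = 2)
    (f : Vec n →ₗ[ℂ] ℂ) (hfn : Module.finrank ℂ (LinearMap.ker f) = n)
    {B : Mat n} (hB : Function.Injective (Matrix.mulVecLin B)) :
    ∃ y, y ∈ L ∧ y ≠ 0 ∧ Matrix.mulVecLin B y ∈ LinearMap.ker f := by
  set L' := L.map (Matrix.mulVecLin B) with hL'def
  have hL' : Module.finrank ℂ L' = 2 := by
    rw [← hL]
    exact (Submodule.equivMapOfInjective _ hB L).finrank_eq.symm
  have hsum := Submodule.finrank_sup_add_finrank_inf_eq L' (LinearMap.ker f)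
  have hle : Module.finrank ℂ ↥(L' ⊔ LinearMap.ker f) ≤ n + 1 := by
    have := Submodule.finrank_le (L' ⊔ LinearMap.ker f)
    rwa [Module.finrank_fin_fun] at this
  have hpos : Module.finrank ℂ ↥(L' ⊓ LinearMap.ker f) ≠ 0 := by
    rw [hL', hfn] at hsum; omega
  have hne : L' ⊓ LinearMap.ker f ≠ ⊥ := by
    intro hbot
    rw [hbot, finrank_bot] at hpos
    exact hpos rfl
  obtain ⟨v, hv, hv0⟩ := Submodule.exists_mem_ne_zero_of_ne_bot hne
  obtain ⟨y, hyL, hyv⟩ := hv.1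
  refine ⟨y, hyL, ?_, by rw [hyv]; exact hv.2⟩
  intro hy0
  rw [hy0, map_zero] at hyv
  exact hv0 hyv.symm

def Bmat (g : PSLn n) : Mat n :=
  ((Matrix.SpecialLinearGroup.toGL (Quotient.out g) : GLn n) : Mat n)

lemma Bmat_inj (g : PSLn n) : Function.Injective (Matrix.mulVecLin (Bmat g)) :=
  glInj _

lemma Bmat_ne_zero (g : PSLn n) {v : Vec n} (hv : v ≠ 0) :
    Matrix.mulVecLin (Bmat g) v ≠ 0 := fun h => hv (Bmat_inj g (by rw [h, map_zero]))

lemma actPSL_mk (g : PSLn n) (v : Vec n) (hv : v ≠ 0) :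
    actPSL g (Projectivization.mk ℂ v hv)
      = Projectivization.mk ℂ (Matrix.mulVecLin (Bmat g) v) (Bmat_ne_zero g hv) := rfl

lemma seq_dichotomy (s : ℕ → ℕ) :
    (∃ b, ∃ φ : ℕ → ℕ, StrictMono φ ∧ ∀ k, s (φ k) = b) ∨ Tendsto s atTop atTop := by
  by_cases h : ∃ b, {k | s k = b}.Infinite
  · left
    obtain ⟨b, hb⟩ := h
    obtain ⟨φ, hφ, hs⟩ :=
      Filter.extraction_of_frequently_atTop (Nat.frequently_atTop_iff_infinite.2 hb)
    exact ⟨b, φ, hφ, hs⟩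
  · right
    push_neg at h
    rw [tendsto_atTop]
    intro b
    have hfin : {k | s k < b}.Finite := by
      have hsub : {k | s k < b} ⊆ ⋃ c ∈ Finset.range b, {k | s k = c} := by
        intro k hk
        exact Set.mem_biUnion (Finset.mem_range.2 hk) rfl
      exact (Set.Finite.biUnion (Finset.range b).finite_toSet
        (fun c _ => h c)).subset hsub
    rw [← Nat.cofinite_eq_atTop, Filter.eventually_cofinite]
    simpa [not_le] using hfin

end EqProof
end Aux

/-- If a sequence `(γ_m) ⊆ PSL(n+1,ℂ)` converges as quasi-projective
transformations to `γ` and `Ker(γ)` is a hyperplane, then the equicontinuity region of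
the family `{γ_m : m ∈ ℕ}` is exactly `ℙⁿ_ℂ ∖ Ker(γ)`. -/
theorem eqRegion_of_family_eq_compl_ker
    (n : ℕ) (hn : 1 ≤ n) (γ : ℕ → PSLn n) (M : Mat n) (hM : M ≠ 0)
    (hconv : QPConv (fun m => actPSL (γ m)) M) (hker : IsProjHyperplane (qKer M)) :
    eqRegionFam (fun m => actPSL (γ m)) = (qKer M)ᶜ := by
  classical
  ext z
  simp only [Set.mem_compl_iff]
  constructor
  · rintro ⟨U, hUopen, hzU, hall⟩ hzK
    obtain ⟨φ, hφ, F, hFconv⟩ := hall id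
    simp only [id_eq] at hFconv
    -- the kernel has dimension n, hence the range has dimension 1
    obtain ⟨W, hWn, hWeq⟩ := hker
    have hkerW : LinearMap.ker (Matrix.mulVecLin M) = W := EqProof.projSet_inj hWeq
    have hkn : Module.finrank ℂ (LinearMap.ker (Matrix.mulVecLin M)) = n := by
      rw [hkerW]; exact hWn
    have hfr1 : Module.finrank ℂ (LinearMap.range (Matrix.mulVecLin M)) = 1 := by
      have h := LinearMap.finrank_range_add_finrank_ker (Matrix.mulVecLin M)
      rw [hkn, Module.finrank_fin_fun] at h
      omega
    obtain ⟨v0, hv00, hspan⟩ := finrank_eq_one_iff'.1 hfr1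
    set u : Vec n := (v0 : Vec n) with hu_def
    have hu : u ≠ 0 := fun h => hv00 (Subtype.ext h)
    set cpt := Projectivization.mk ℂ u hu with hcpt
    -- qMap is constantly cpt away from the kernel
    have hqMap : ∀ x : Pn n, x ∉ qKer M → qMap M x = cpt := by
      intro x hx
      have hxr : M *ᵥ x.rep ≠ 0 := by
        intro h0
        exact hx (LinearMap.mem_ker.2 (show Matrix.mulVecLin M x.rep = 0 by
          rw [Matrix.mulVecLin_apply]; exact h0))
      simp only [qMap]
      rw [dif_pos hxr]
      obtain ⟨c, hc⟩ := hspan ⟨M *ᵥ x.rep, ⟨x.rep, rfl⟩⟩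
      have hc' : (c : ℂ) • u = M *ᵥ x.rep := by
        have := congrArg Subtype.val hc
        simpa using this
      rw [hcpt]
      exact (Projectivization.mk_eq_mk_iff' ℂ _ _ hxr hu).2 ⟨c, hc'⟩
    -- a vector not killed by M
    obtain ⟨w0, hw0⟩ : ∃ w0, Matrix.mulVecLin M w0 = u := LinearMap.mem_range.1 v0.2
    have hMw0 : Matrix.mulVecLin M w0 ≠ 0 := by rw [hw0]; exact hu
    have hzker : Matrix.mulVecLin M z.rep = 0 := LinearMap.mem_ker.1 hzK
    -- the projective line through z and w0
    set L := Submodule.span ℂ ({z.rep, w0} : Set (Vec n)) with hLdef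
    have hindep : LinearIndependent ℂ ![z.rep, w0] := by
      rw [LinearIndependent.pair_iff]
      intro s t hst
      have h1 : Matrix.mulVecLin M (s • z.rep + t • w0) = 0 := by rw [hst, map_zero]
      rw [map_add, _root_.map_smul, _root_.map_smul, hzker, smul_zero, zero_add] at h1
      have ht : t = 0 := by
        by_contra ht
        exact hMw0 ((smul_eq_zero.1 h1).resolve_left ht)
      rw [ht, zero_smul, add_zero] at hst
      have hs : s = 0 := by
        by_contra hs
        exact z.rep_nonzero ((smul_eq_zero.1 hst).resolve_left hs)
      exact ⟨hs, ht⟩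
    have hrange2 : Set.range ![z.rep, w0] = {z.rep, w0} := by
      ext x
      constructor
      · rintro ⟨i, rfl⟩
        fin_cases i
        · exact Set.mem_insert _ _
        · exact Set.mem_insert_of_mem _ rfl
      · rintro (rfl | rfl)
        · exact ⟨0, rfl⟩
        · exact ⟨1, rfl⟩
    have hL2 : Module.finrank ℂ L = 2 := by
      have h := finrank_span_eq_card hindep
      rw [hrange2] at h
      rw [hLdef, h]
      simp
    set SL := projSet L with hSLdef
    have hzrepL : z.rep ∈ L := Submodule.subset_span (Set.mem_insert _ _)
    have hzSL : z ∈ SL := hzrepL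
    have hcap : ∀ p ∈ SL, p ∈ qKer M → p = z := by
      intro p hp hpk
      obtain ⟨a, b, hab⟩ := Submodule.mem_span_pair.1 hp
      have hpk' : Matrix.mulVecLin M p.rep = 0 := LinearMap.mem_ker.1 hpk
      rw [← hab, map_add, _root_.map_smul, _root_.map_smul, hzker, smul_zero, zero_add] at hpk'
      have hb : b = 0 := by
        by_contra hb
        exact hMw0 ((smul_eq_zero.1 hpk').resolve_left hb)
      rw [hb, zero_smul, add_zero] at hab
      calc p = Projectivization.mk ℂ p.rep p.rep_nonzero := (p.mk_rep).symm
        _ = Projectivization.mk ℂ z.rep z.rep_nonzero :=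
            (Projectivization.mk_eq_mk_iff' ℂ _ _ p.rep_nonzero z.rep_nonzero).2 ⟨a, hab⟩
        _ = z := z.mk_rep
    have hSLcomp : IsCompact SL := EqProof.isCompact_projSet L
    haveI : CompactSpace ↥SL := isCompact_iff_compactSpace.mp hSLcomp
    obtain ⟨K1', hK1'comp, hzint, hK1'sub⟩ :=
      exists_compact_subset (X := ↥SL) (U := Subtype.val ⁻¹' U)
        (hUopen.preimage continuous_subtype_val) (x := ⟨z, hzSL⟩) hzU
    obtain ⟨O, hOopen, hOeq⟩ := isOpen_induced_iff.1 (isOpen_interior (s := K1'))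
    set K1 : Set (Pn n) := Subtype.val '' K1' with hK1def
    have hK1comp : IsCompact K1 := hK1'comp.image continuous_subtype_val
    have hK1U : K1 ⊆ U := by rintro _ ⟨x, hx, rfl⟩; exact hK1'sub hx
    have hK1SL : K1 ⊆ SL := by rintro _ ⟨x, hx, rfl⟩; exact x.2
    have hzO : z ∈ O := by
      have h : (⟨z, hzSL⟩ : ↥SL) ∈ Subtype.val ⁻¹' O := by rw [hOeq]; exact hzint
      exact h
    have hcover : ∀ p, p ∈ SL → p ∈ O → p ∈ K1 := by
      intro p hp hpO
      refine ⟨⟨p, hp⟩, interior_subset ?_, rfl⟩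
      rw [← hOeq]
      exact hpO
    set K2 := SL \ O with hK2def
    have hK2comp : IsCompact K2 := hSLcomp.diff hOopen
    have hK2c : K2 ⊆ (qKer M)ᶜ := by
      rintro p ⟨hp, hpO⟩ hpk
      exact hpO ((hcap p hp hpk) ▸ hzO)
    -- pointwise limits identify F away from z
    have hFx : ∀ x ∈ K1, x ≠ z → F x = cpt := by
      intro x hx hxz
      have hxU : x ∈ U := hK1U hx
      have hxK : x ∉ qKer M := fun hk => hxz (hcap x (hK1SL hx) hk)
      have t1 : Tendsto (fun k => actPSL (γ (φ k)) x) atTop (𝓝 (F x)) := by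
        apply EqProof.tendsto_of_entourage
        intro W' hW' hdiag
        filter_upwards [hFconv {x} (Set.singleton_subset_iff.2 hxU) isCompact_singleton
          W' hW' hdiag] with k hk
        exact hk x rfl
      have t2 : Tendsto (fun m => actPSL (γ m) x) atTop (𝓝 (qMap M x)) := by
        apply EqProof.tendsto_of_entourage
        intro W' hW' hdiag
        filter_upwards [hconv {x} (Set.singleton_subset_iff.2 hxK) isCompact_singleton
          W' hW' hdiag] with m hm
        exact hm x rfl
      have t2' := t2.comp hφ.tendsto_atTop
      rw [hqMap x hxK] at t2'
      exact tendsto_nhds_unique t1 t2'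
    -- a hyperplane avoiding cpt and F z
    obtain ⟨f, hfc, hfF⟩ :=
      EqProof.exists_functional cpt.rep (F z).rep cpt.rep_nonzero (F z).rep_nonzero
    have hfn := EqProof.finrank_ker_functional f cpt.rep hfc
    have hHclosed : IsClosed (projSet (LinearMap.ker f)) :=
      EqProof.isClosed_projSet (LinearMap.ker f)
    set O2 := (projSet (LinearMap.ker f))ᶜ with hO2def
    have hcptO2 : cpt ∈ O2 := fun h => hfc (LinearMap.mem_ker.1 h)
    have hFzO2 : F z ∈ O2 := fun h => hfF (LinearMap.mem_ker.1 h)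
    set Wset := (O2 ×ˢ O2) ∪ ((({cpt, F z} : Set (Pn n))ᶜ) ×ˢ (Set.univ : Set (Pn n)))
      with hWsetdef
    have hWopen : IsOpen Wset := by
      apply IsOpen.union
      · exact (hHclosed.isOpen_compl).prod (hHclosed.isOpen_compl)
      · exact (((Set.finite_singleton (F z)).insert cpt).isClosed.isOpen_compl).prod isOpen_univ
    have hWdiag : ∀ y, (y, y) ∈ Wset := by
      intro y
      by_cases hy : y ∈ ({cpt, F z} : Set (Pn n))
      · rcases hy with rfl | hy
        · exact Or.inl ⟨hcptO2, hcptO2⟩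
        · rw [Set.mem_singleton_iff] at hy
          subst hy
          exact Or.inl ⟨hFzO2, hFzO2⟩
      · exact Or.inr ⟨hy, trivial⟩
    have hmemW : ∀ a b : Pn n, a ∈ ({cpt, F z} : Set (Pn n)) → (a, b) ∈ Wset → b ∈ O2 := by
      rintro a b ha (⟨-, hb⟩ | ⟨ha', -⟩)
      · exact hb
      · exact absurd ha ha'
    have hE1 := hFconv K1 hK1U hK1comp Wset hWopen hWdiag
    have hE2 := hφ.tendsto_atTop.eventually (hconv K2 hK2c hK2comp Wset hWopen hWdiag)
    obtain ⟨k, hk1, hk2⟩ := (hE1.and hE2).exists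
    have hallO2 : ∀ x, x ∈ SL → actPSL (γ (φ k)) x ∈ O2 := by
      intro x hx
      by_cases hxO : x ∈ O
      · have hxK1 := hcover x hx hxO
        by_cases hxz : x = z
        · subst hxz
          exact hmemW _ _ (Set.mem_insert_of_mem _ rfl) (hk1 x hxK1)
        · have h := hk1 x hxK1
          rw [hFx x hxK1 hxz] at h
          exact hmemW _ _ (Set.mem_insert _ _) h
      · have hxK2 : x ∈ K2 := ⟨hx, hxO⟩
        have h := hk2 x hxK2
        rw [hqMap x (fun hc => hxO ((hcap x hx hc) ▸ hzO))] at h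
        exact hmemW _ _ (Set.mem_insert _ _) h
    -- contradiction: the image line must meet the hyperplane
    obtain ⟨y, hyL, hy0, hyker⟩ :=
      EqProof.line_meets_hyperplane L hL2 f hfn (EqProof.Bmat_inj (γ (φ k)))
    have hySL : Projectivization.mk ℂ y hy0 ∈ SL := (EqProof.mem_projSet_iff L y hy0).2 hyL
    have himg := hallO2 _ hySL
    rw [EqProof.actPSL_mk] at himg
    exact himg ((EqProof.mem_projSet_iff (LinearMap.ker f) _
      (EqProof.Bmat_ne_zero _ hy0)).2 hyker)
  · intro hz
    refine ⟨(qKer M)ᶜ, (EqProof.isClosed_projSet _).isOpen_compl, hz, ?_⟩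
    intro s
    rcases EqProof.seq_dichotomy s with ⟨b, φ, hφ, hs⟩ | htend
    · refine ⟨φ, hφ, actPSL (γ b), ?_⟩
      intro K hK hKcomp W hW hdiag
      refine Filter.Eventually.of_forall ?_
      intro k x _
      simpa only [hs k] using hdiag (actPSL (γ b) x)
    · refine ⟨id, strictMono_id, qMap M, ?_⟩
      intro K hK hKcomp W hW hdiag
      exact htend.eventually (hconv K hK hKcomp W hW hdiag)
end

section
/- Let n ≥ 1, let G be a discrete subgroup of PU(1,n), and let (γ_m) be a sequence of pairwise distinct elements of G converging, in the sense of quasi-projective transformations, to a quasi-projective map γ. Then the unique point of Ker(γ) ∩ ∂𝐇ⁿ_ℂ belongs to the Chen–Greenberg limit set Λ_CG(G). -/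
open Filter Topology Matrix

-- ===================== Auxiliary infrastructure =====================

noncomputable section AuxQP

open Complex Filter Topology Matrix

namespace QPaux

variable {n : ℕ}

/-! ### Basic algebra of the Hermitian form -/

def eps {n : ℕ} (i : Fin (n + 1)) : ℂ := if i = 0 then -1 else 1

lemma eps_conj (i : Fin (n + 1)) : (starRingEnd ℂ) (eps i) = eps i := by
  unfold eps; split <;> simp

lemma eps_mul_self (i : Fin (n + 1)) : eps i * eps i = 1 := by
  unfold eps; split <;> norm_num

lemma eps_ne_zero (i : Fin (n + 1)) : eps i ≠ 0 := by
  unfold eps; split <;> norm_num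

lemma herm_eq_sum (u v : Vec n) :
    herm n u v = ∑ i : Fin (n + 1), eps i * (u i * (starRingEnd ℂ) (v i)) := by
  rw [herm, Fin.sum_univ_succ]
  congr 1
  · simp [eps]
  · exact (Finset.sum_congr rfl fun j _ => by
      simp [eps, Fin.succ_ne_zero]).symm

lemma herm_add_left (u u' v : Vec n) : herm n (u + u') v = herm n u v + herm n u' v := by
  simp only [herm_eq_sum, Pi.add_apply, ← Finset.sum_add_distrib]
  exact Finset.sum_congr rfl fun i _ => by ring

lemma herm_smul_left (c : ℂ) (u v : Vec n) : herm n (c • u) v = c * herm n u v := by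
  simp only [herm_eq_sum, Pi.smul_apply, smul_eq_mul, Finset.mul_sum]
  exact Finset.sum_congr rfl fun i _ => by ring

lemma herm_conj (u v : Vec n) : herm n v u = (starRingEnd ℂ) (herm n u v) := by
  simp only [herm_eq_sum, map_sum]
  refine Finset.sum_congr rfl fun i _ => ?_
  simp only [_root_.map_mul, eps_conj, Complex.conj_conj]
  ring

lemma herm_smul_right (c : ℂ) (u v : Vec n) :
    herm n u (c • v) = (starRingEnd ℂ) c * herm n u v := by
  rw [herm_conj (c • v) u, herm_smul_left, _root_.map_mul, ← herm_conj]

lemma herm_add_right (u v v' : Vec n) : herm n u (v + v') = herm n u v + herm n u v' := by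
  rw [herm_conj (v + v') u, herm_add_left, map_add, ← herm_conj, ← herm_conj]

lemma herm_zero_right (u : Vec n) : herm n u 0 = 0 := by
  simp [herm_eq_sum]

lemma herm_zero_left (v : Vec n) : herm n 0 v = 0 := by
  simp [herm_eq_sum]

def hermR (v : Vec n) : ℝ :=
  ∑ i : Fin (n + 1), (if i = 0 then (-1 : ℝ) else 1) * Complex.normSq (v i)

lemma herm_self (v : Vec n) : herm n v v = ((hermR v : ℝ) : ℂ) := by
  rw [herm_eq_sum, hermR]
  push_cast
  refine Finset.sum_congr rfl fun i _ => ?_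
  rw [Complex.mul_conj]
  unfold eps
  split <;> push_cast <;> ring

lemma eq_zero_of_herm_self {v : Vec n} (h0 : v 0 = 0) (h : herm n v v = 0) : v = 0 := by
  rw [herm_self] at h
  have hR : hermR v = 0 := by exact_mod_cast h
  have hnn : ∀ i ∈ Finset.univ, 0 ≤ (if (i : Fin (n + 1)) = 0 then (-1 : ℝ) else 1) *
      Complex.normSq (v i) := by
    intro i _
    rcases eq_or_ne i 0 with rfl | hi
    · simp [h0]
    · rw [if_neg hi, one_mul]; exact Complex.normSq_nonneg _
  have hz := (Finset.sum_eq_zero_iff_of_nonneg hnn).1 hR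
  funext i
  rcases eq_or_ne i 0 with rfl | hi
  · simpa using h0
  · have := hz i (Finset.mem_univ i)
    rw [if_neg hi, one_mul] at this
    simpa using Complex.normSq_eq_zero.mp this

lemma coord_ne_zero_of_isotropic {v : Vec n} (h : herm n v v = 0) (hv : v ≠ 0) :
    v 0 ≠ 0 := fun h0 => hv (eq_zero_of_herm_self h0 h)

lemma hermR_nonneg_of_zero {v : Vec n} (h0 : v 0 = 0) : 0 ≤ hermR v :=
  Finset.sum_nonneg fun i _ => by
    rcases eq_or_ne i 0 with rfl | hi
    · simp [h0]
    · rw [if_neg hi, one_mul]; exact Complex.normSq_nonneg _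

/-- Key lemma: if `u` is isotropic nonzero and `v ⊥ u`, then `herm v v` is a
nonnegative real, vanishing only if `v` is a multiple of `u`. -/
lemma herm_perp {u v : Vec n} (hu : herm n u u = 0) (hu0 : u ≠ 0)
    (huv : herm n u v = 0) :
    ∃ r : ℝ, 0 ≤ r ∧ herm n v v = (r : ℂ) ∧ (herm n v v = 0 → ∃ c : ℂ, v = c • u) := by
  have h0 : u 0 ≠ 0 := coord_ne_zero_of_isotropic hu hu0
  set c : ℂ := v 0 / u 0 with hc
  set z : Vec n := v + (-c) • u with hzdef
  have hvu : herm n v u = 0 := by rw [herm_conj, huv, map_zero]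
  have hz0 : z 0 = 0 := by
    simp only [hzdef, Pi.add_apply, Pi.smul_apply, smul_eq_mul, hc]
    field_simp
    ring
  have hzz : herm n z z = herm n v v := by
    simp only [hzdef, herm_add_left, herm_add_right, herm_smul_left, herm_smul_right,
      hu, huv, hvu]
    ring
  refine ⟨hermR z, hermR_nonneg_of_zero hz0, ?_, ?_⟩
  · rw [← hzz, herm_self]
  · intro hvv
    have : z = 0 := eq_zero_of_herm_self hz0 (by rw [hzz, hvv])
    refine ⟨c, ?_⟩
    have : v + (-c) • u = 0 := by rw [← hzdef, this]
    have := congrArg (fun t => t + c • u) this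
    simpa [add_assoc, ← add_smul] using this

lemma herm_single_right (u : Vec n) (i : Fin (n + 1)) :
    herm n u (Pi.single i 1) = eps i * u i := by
  rw [herm_eq_sum, Finset.sum_eq_single i]
  · simp
  · intro b _ hb
    rw [Pi.single_eq_of_ne hb]
    simp
  · intro h; exact absurd (Finset.mem_univ i) h

lemma herm_single_left (v : Vec n) (i : Fin (n + 1)) :
    herm n (Pi.single i 1) v = eps i * (starRingEnd ℂ) (v i) := by
  rw [herm_conj, herm_single_right, _root_.map_mul, eps_conj]

lemma herm_nondeg_right {v : Vec n} (h : ∀ u, herm n u v = 0) : v = 0 := by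
  funext i
  have := h (Pi.single i 1)
  rw [herm_single_left] at this
  have h2 := (mul_eq_zero.mp this).resolve_left (eps_ne_zero i)
  simpa using (map_eq_zero (starRingEnd ℂ)).mp h2

lemma herm_o_right (v : Vec n) : herm n v (Pi.single 0 1) = -(v 0) := by
  rw [herm_single_right]
  simp [eps]

lemma herm_o_o : herm n (Pi.single 0 1) (Pi.single 0 1) = -1 := by
  rw [herm_o_right]
  simp

set_option maxHeartbeats 1000000 in
lemma continuous_herm : Continuous fun p : Vec n × Vec n => herm n p.1 p.2 := by
  have hconj : Continuous fun z : ℂ => (starRingEnd ℂ) z := Complex.continuous_conj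
  simp only [herm_eq_sum]
  refine continuous_finset_sum _ fun i _ => continuous_const.mul (Continuous.mul ?_ ?_)
  · exact (continuous_apply (A := fun _ : Fin (n+1) => ℂ) i).comp continuous_fst
  · exact hconj.comp ((continuous_apply (A := fun _ : Fin (n+1) => ℂ) i).comp continuous_snd)

set_option maxHeartbeats 1000000 in
lemma tendsto_herm {u v : ℕ → Vec n} {a b : Vec n}
    (hu : Tendsto u atTop (𝓝 a)) (hv : Tendsto v atTop (𝓝 b)) :
    Tendsto (fun m => herm n (u m) (v m)) atTop (𝓝 (herm n a b)) :=
  (continuous_herm.tendsto (a, b)).comp (hu.prodMk_nhds hv)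

/-! ### Matrices as functions, norms, limits -/

def toF (X : Mat n) : Fin (n + 1) → Fin (n + 1) → ℂ := fun i j => X i j

lemma toF_injective : Function.Injective (toF (n := n)) := by
  intro X Y h
  ext i j
  exact congrFun (congrFun h i) j

lemma continuous_toF : Continuous (toF (n := n)) :=
  continuous_pi fun i => continuous_pi fun j => continuous_id.matrix_elem i j

def mnorm (X : Mat n) : ℝ := ‖toF X‖

lemma mnorm_nonneg (X : Mat n) : 0 ≤ mnorm X := norm_nonneg _

lemma mnorm_eq_zero {X : Mat n} : mnorm X = 0 ↔ X = 0 := by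
  rw [mnorm, norm_eq_zero]
  constructor
  · intro h
    exact toF_injective (show toF X = toF 0 from h)
  · intro h
    rw [h]; rfl

lemma mnorm_smul (c : ℂ) (X : Mat n) : mnorm (c • X) = ‖c‖ * mnorm X := by
  rw [mnorm, show toF (c • X) = c • toF X from rfl, norm_smul, mnorm]

lemma entry_le_mnorm (X : Mat n) (i j : Fin (n + 1)) : ‖X i j‖ ≤ mnorm X :=
  le_trans (norm_le_pi_norm (toF X i) j) (norm_le_pi_norm (toF X) i)

lemma mnorm_pos {X : Mat n} (h : X ≠ 0) : 0 < mnorm X :=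
  lt_of_le_of_ne (mnorm_nonneg X) fun h0 => h (mnorm_eq_zero.mp h0.symm)

lemma tendsto_matrix {X : ℕ → Mat n} {Y : Mat n}
    (h : ∀ i j, Tendsto (fun m => X m i j) atTop (𝓝 (Y i j))) :
    Tendsto X atTop (𝓝 Y) := by
  have hof : Continuous fun f : Fin (n + 1) → Fin (n + 1) → ℂ => (Matrix.of f : Mat n) :=
    continuous_matrix fun i j => (continuous_apply j).comp (continuous_apply i)
  have h2 : Tendsto (fun m => toF (X m)) atTop (𝓝 (toF Y)) :=
    tendsto_pi_nhds.mpr fun i => tendsto_pi_nhds.mpr fun j => h i j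
  exact (hof.tendsto (toF Y)).comp h2

lemma tendsto_entries {X : ℕ → Mat n} {Y : Mat n} (h : Tendsto X atTop (𝓝 Y))
    (i j : Fin (n + 1)) : Tendsto (fun m => X m i j) atTop (𝓝 (Y i j)) :=
  ((continuous_id.matrix_elem i j).tendsto Y).comp h

lemma tendsto_mulVec {X : ℕ → Mat n} {Y : Mat n}
    (h : ∀ i j, Tendsto (fun m => X m i j) atTop (𝓝 (Y i j))) (v : Vec n) :
    Tendsto (fun m => X m *ᵥ v) atTop (𝓝 (Y *ᵥ v)) := by
  rw [tendsto_pi_nhds]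
  intro i
  simp only [Matrix.mulVec, dotProduct]
  exact tendsto_finset_sum _ fun j _ => (h i j).mul tendsto_const_nhds

lemma tendsto_mulVec_right {M : Mat n} {v : ℕ → Vec n} {x : Vec n}
    (h : Tendsto v atTop (𝓝 x)) :
    Tendsto (fun k => M *ᵥ v k) atTop (𝓝 (M *ᵥ x)) := by
  rw [tendsto_pi_nhds]
  intro i
  simp only [Matrix.mulVec, dotProduct]
  exact tendsto_finset_sum _ fun j _ => tendsto_const_nhds.mul
    (((continuous_apply j).tendsto x).comp h)

/-! ### The embedding `gfun` of projective space in matrices -/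

def nsq (v : Vec n) : ℂ := ((‖v‖ ^ 2 : ℝ) : ℂ)

lemma nsq_ne_zero {v : Vec n} (hv : v ≠ 0) : nsq v ≠ 0 := by
  have : ‖v‖ ≠ 0 := norm_ne_zero_iff.mpr hv
  simp [nsq, Complex.ofReal_eq_zero, pow_eq_zero_iff, this]

def gfun (v : Vec n) : Mat n := Matrix.of fun i j => v i * (starRingEnd ℂ) (v j) / nsq v

lemma gfun_apply (v : Vec n) (i j : Fin (n + 1)) :
    gfun v i j = v i * (starRingEnd ℂ) (v j) / nsq v := rfl

lemma gfun_smul {c : ℂ} (hc : c ≠ 0) (v : Vec n) : gfun (c • v) = gfun v := by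
  rcases eq_or_ne v 0 with rfl | hv
  · rw [smul_zero]
  · have hnv : nsq v ≠ 0 := nsq_ne_zero hv
    have hX : ((‖c‖ ^ 2 : ℝ) : ℂ) ≠ 0 :=
      Complex.ofReal_ne_zero.mpr (pow_ne_zero 2 (norm_ne_zero_iff.mpr hc))
    have hcc : c * (starRingEnd ℂ) c = ((‖c‖ ^ 2 : ℝ) : ℂ) := by
      rw [Complex.mul_conj]
      norm_cast
      rw [← Complex.sq_norm]
    have hns : nsq (c • v) = ((‖c‖ ^ 2 : ℝ) : ℂ) * nsq v := by
      rw [nsq, nsq, norm_smul]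
      push_cast
      ring
    ext i j
    rw [gfun_apply, gfun_apply]
    simp only [Pi.smul_apply, smul_eq_mul, _root_.map_mul, hns]
    rw [div_eq_div_iff (mul_ne_zero hX hnv) hnv, ← hcc]
    ring

def ssum (v : Vec n) : ℂ := ∑ j, v j * (starRingEnd ℂ) (v j)

lemma ssum_ne_zero {v : Vec n} (hv : v ≠ 0) : ssum v ≠ 0 := by
  have hs : ssum v = ((∑ j, Complex.normSq (v j) : ℝ) : ℂ) := by
    rw [ssum]
    push_cast
    exact Finset.sum_congr rfl fun j _ => Complex.mul_conj (v j)
  rw [hs]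
  rw [Ne, Complex.ofReal_eq_zero]
  intro h
  apply hv
  have := (Finset.sum_eq_zero_iff_of_nonneg fun j _ => Complex.normSq_nonneg (v j)).1 h
  funext j
  simpa using Complex.normSq_eq_zero.mp (this j (Finset.mem_univ j))

lemma gfun_row (u : Vec n) (i : Fin (n + 1)) :
    ∑ j, gfun u i j * u j = u i * (ssum u / nsq u) := by
  calc ∑ j, gfun u i j * u j
      = ∑ j, u i / nsq u * (u j * (starRingEnd ℂ) (u j)) := by
        refine Finset.sum_congr rfl fun j _ => ?_
        rw [gfun_apply]; ring
    _ = u i / nsq u * ssum u := by rw [← Finset.mul_sum]; rfl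
    _ = u i * (ssum u / nsq u) := by ring

lemma gfun_inj {u v : Vec n} (hu : u ≠ 0) (hv : v ≠ 0) (h : gfun u = gfun v) :
    ∃ c : ℂ, c ≠ 0 ∧ u = c • v := by
  have key : ∀ i, u i * (ssum u / nsq u) =
      v i * ((∑ j, (starRingEnd ℂ) (v j) * u j) / nsq v) := by
    intro i
    have h1 : ∑ j, gfun u i j * u j = u i * (ssum u / nsq u) := gfun_row u i
    have h2 : ∑ j, gfun v i j * u j =
        v i * ((∑ j, (starRingEnd ℂ) (v j) * u j) / nsq v) := by
      calc ∑ j, gfun v i j * u j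
          = ∑ j, v i / nsq v * ((starRingEnd ℂ) (v j) * u j) := by
            refine Finset.sum_congr rfl fun j _ => ?_
            rw [gfun_apply]; ring
        _ = v i / nsq v * ∑ j, (starRingEnd ℂ) (v j) * u j := by rw [← Finset.mul_sum]
        _ = v i * ((∑ j, (starRingEnd ℂ) (v j) * u j) / nsq v) := by ring
    rw [← h1, h, h2]
  set a : ℂ := ssum u / nsq u with ha
  have ha0 : a ≠ 0 := div_ne_zero (ssum_ne_zero hu) (nsq_ne_zero hu)
  set b : ℂ := (∑ j, (starRingEnd ℂ) (v j) * u j) / nsq v with hb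
  have huv : ∀ i, u i = v i * b / a := fun i => (eq_div_iff ha0).mpr (key i)
  refine ⟨b / a, ?_, ?_⟩
  · intro h0
    have hb0 : b = 0 := by
      rcases div_eq_zero_iff.mp h0 with h' | h'
      · exact h'
      · exact absurd h' ha0
    apply hu
    funext i
    rw [huv i, hb0]
    simp
  · funext i
    rw [huv i]
    simp only [Pi.smul_apply, smul_eq_mul]
    ring

/-! ### The map `gp` on projective space -/

def gp : Pn n → Mat n := fun p => gfun p.rep

lemma gp_mk {v : Vec n} (hv : v ≠ 0) : gp (Projectivization.mk ℂ v hv) = gfun v := by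
  obtain ⟨a, ha⟩ := Projectivization.exists_smul_eq_mk_rep ℂ v hv
  rw [gp, ← ha, Units.smul_def, gfun_smul (Units.ne_zero a)]

lemma gp_injective : Function.Injective (gp (n := n)) := by
  intro p q h
  induction' p using Projectivization.ind with v hv
  induction' q using Projectivization.ind with w hw
  rw [gp_mk hv, gp_mk hw] at h
  obtain ⟨c, _, hcv⟩ := gfun_inj hv hw h
  exact (Projectivization.mk_eq_mk_iff' ℂ _ _ hv hw).2 ⟨c, hcv.symm⟩

lemma continuous_gfun_sub : Continuous fun x : {v : Vec n // v ≠ 0} => gfun x.val := by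
  apply continuous_matrix
  intro i j
  refine Continuous.div (Continuous.mul ?_ ?_) ?_ fun x => nsq_ne_zero x.2
  · exact (continuous_apply i).comp continuous_subtype_val
  · exact Complex.continuous_conj.comp ((continuous_apply j).comp continuous_subtype_val)
  · exact Complex.continuous_ofReal.comp
      ((continuous_norm.comp continuous_subtype_val).pow 2)

lemma gp_resp : ∀ a b : {v : Vec n // v ≠ 0},
    Setoid.r (self := projectivizationSetoid ℂ (Vec n)) a b → gfun a.val = gfun b.val := by
  intro a b hab
  obtain ⟨c, hc⟩ := hab
  have hc' : (c : ℂ) • b.val = a.val := hc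
  rw [← hc', gfun_smul (Units.ne_zero c)]

lemma continuous_gp : Continuous (gp (n := n)) := by
  have heq : gp (n := n) =
      Quotient.lift (fun x : {v : Vec n // v ≠ 0} => gfun x.val) gp_resp := by
    funext p
    induction' p using Projectivization.ind with v hv
    rw [gp_mk hv]
    rfl
  rw [heq]
  exact continuous_gfun_sub.quotient_lift gp_resp

lemma tendsto_gfun {v : ℕ → Vec n} {x : Vec n} (hx : x ≠ 0)
    (h : Tendsto v atTop (𝓝 x)) :
    Tendsto (fun k => gfun (v k)) atTop (𝓝 (gfun x)) := by
  apply tendsto_matrix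
  intro i j
  simp only [gfun_apply]
  have happ : ∀ l : Fin (n + 1), Tendsto (fun k => v k l) atTop (𝓝 (x l)) :=
    fun l => ((continuous_apply l).tendsto x).comp h
  have hnsq : Tendsto (fun k => nsq (v k)) atTop (𝓝 (nsq x)) := by
    have hc : Continuous fun w : Vec n => nsq w :=
      Complex.continuous_ofReal.comp (continuous_norm.pow 2)
    exact (hc.tendsto x).comp h
  exact ((happ i).mul ((Complex.continuous_conj.tendsto _).comp (happ j))).div hnsq
    (nsq_ne_zero hx)

lemma mk_smul_eq {v : Vec n} (hv : v ≠ 0) {c : ℂ} (hc : c ≠ 0) :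
    Projectivization.mk ℂ (c • v) (smul_ne_zero hc hv) = Projectivization.mk ℂ v hv :=
  (Projectivization.mk_eq_mk_iff' ℂ _ _ _ hv).2 ⟨c, rfl⟩

lemma tendsto_mk {v : ℕ → Vec n} {x : Vec n} (hv : ∀ k, v k ≠ 0) (hx : x ≠ 0)
    (h : Tendsto v atTop (𝓝 x)) :
    Tendsto (fun k => Projectivization.mk ℂ (v k) (hv k)) atTop
      (𝓝 (Projectivization.mk ℂ x hx)) := by
  have h1 : Tendsto (fun k => (⟨v k, hv k⟩ : {w : Vec n // w ≠ 0})) atTop (𝓝 ⟨x, hx⟩) := by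
    rw [tendsto_subtype_rng]
    exact h
  have h2 : Continuous fun y : {w : Vec n // w ≠ 0} => (Quotient.mk'' y : Pn n) :=
    continuous_quotient_mk'
  exact (h2.tendsto _).comp h1

instance : CompactSpace (Pn n) := by
  constructor
  have hs : IsCompact (Metric.sphere (0 : Vec n) 1) := isCompact_sphere 0 1
  have hT : IsCompact (Subtype.val ⁻¹' Metric.sphere (0 : Vec n) 1 :
      Set {v : Vec n // v ≠ 0}) := by
    rw [Topology.IsEmbedding.isCompact_iff Topology.IsEmbedding.subtypeVal]
    have himg : Subtype.val '' (Subtype.val ⁻¹' Metric.sphere (0 : Vec n) 1 :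
        Set {v : Vec n // v ≠ 0}) = Metric.sphere (0 : Vec n) 1 := by
      ext w
      constructor
      · rintro ⟨x, hx, rfl⟩
        exact hx
      · intro hw
        have h1 : ‖w‖ = 1 := by simpa using hw
        have hw0 : w ≠ 0 := by
          intro h0
          rw [h0] at h1
          simp at h1
        exact ⟨⟨w, hw0⟩, hw, rfl⟩
    rw [himg]
    exact hs
  have h2 : Continuous fun y : {w : Vec n // w ≠ 0} => (Quotient.mk'' y : Pn n) :=
    continuous_quotient_mk'
  have himg := hT.image h2
  have huniv : (Set.univ : Set (Pn n)) =
      (fun y : {w : Vec n // w ≠ 0} => (Quotient.mk'' y : Pn n)) ''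
        (Subtype.val ⁻¹' Metric.sphere (0 : Vec n) 1) := by
    apply Set.eq_of_subset_of_subset _ (Set.subset_univ _)
    intro p _
    induction' p using Projectivization.ind with v hv
    have hnv : (‖v‖ : ℝ) ≠ 0 := norm_ne_zero_iff.mpr hv
    have hcast : ((‖v‖⁻¹ : ℝ) : ℂ) ≠ 0 := by
      simp [Complex.ofReal_eq_zero, inv_eq_zero, hnv]
    refine ⟨⟨((‖v‖⁻¹ : ℝ) : ℂ) • v, smul_ne_zero hcast hv⟩, ?_, ?_⟩
    · show ((‖v‖⁻¹ : ℝ) : ℂ) • v ∈ Metric.sphere (0 : Vec n) 1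
      rw [Metric.mem_sphere, dist_zero_right, norm_smul]
      rw [Complex.norm_real]
      rw [norm_inv, Real.norm_eq_abs, abs_norm]
      field_simp
    · show (Quotient.mk'' ⟨((‖v‖⁻¹ : ℝ) : ℂ) • v, _⟩ : Pn n) = Projectivization.mk ℂ v hv
      exact mk_smul_eq hv hcast
  rw [huniv]
  exact himg

/-! ### `qKer` and `qMap` -/

lemma mem_qKer_mk {M : Mat n} {v : Vec n} (hv : v ≠ 0) :
    Projectivization.mk ℂ v hv ∈ qKer M ↔ M *ᵥ v = 0 := by
  obtain ⟨a, ha⟩ := Projectivization.exists_smul_eq_mk_rep ℂ v hv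
  have hrep : M *ᵥ (Projectivization.mk ℂ v hv).rep = (a : ℂ) • (M *ᵥ v) := by
    rw [← ha, Units.smul_def, Matrix.mulVec_smul]
  show (Projectivization.mk ℂ v hv).rep ∈ LinearMap.ker (Matrix.mulVecLin M) ↔ _
  rw [LinearMap.mem_ker, Matrix.mulVecLin_apply, hrep, smul_eq_zero]
  simp [Units.ne_zero a]

lemma qMap_mk {M : Mat n} {v : Vec n} (hv : v ≠ 0) (h : M *ᵥ v ≠ 0) :
    qMap M (Projectivization.mk ℂ v hv) = Projectivization.mk ℂ (M *ᵥ v) h := by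
  obtain ⟨a, ha⟩ := Projectivization.exists_smul_eq_mk_rep ℂ v hv
  have hrep : M *ᵥ (Projectivization.mk ℂ v hv).rep = (a : ℂ) • (M *ᵥ v) := by
    rw [← ha, Units.smul_def, Matrix.mulVec_smul]
  have hcond : M *ᵥ (Projectivization.mk ℂ v hv).rep ≠ 0 := by
    rw [hrep]
    exact smul_ne_zero (Units.ne_zero a) h
  rw [qMap, dif_pos hcond]
  refine (Projectivization.mk_eq_mk_iff' ℂ _ _ hcond h).2 ⟨(a : ℂ), hrep.symm⟩

lemma mul_gfun (M : Mat n) (v : Vec n) :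
    M * gfun v = Matrix.of fun i j => (M *ᵥ v) i * (starRingEnd ℂ) (v j) / nsq v := by
  ext i j
  rw [Matrix.mul_apply]
  simp only [gfun_apply, Matrix.of_apply, Matrix.mulVec, dotProduct]
  calc ∑ k, M i k * (v k * (starRingEnd ℂ) (v j) / nsq v)
      = ∑ k, M i k * v k * (starRingEnd ℂ) (v j) / nsq v :=
        Finset.sum_congr rfl fun k _ => by ring
    _ = (∑ k, M i k * v k) * (starRingEnd ℂ) (v j) / nsq v := by
        rw [← Finset.sum_div, ← Finset.sum_mul]

lemma isClosed_qKer (M : Mat n) : IsClosed (qKer M) := by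
  have heq : qKer M = (fun p => M * gp p) ⁻¹' {0} := by
    ext p
    induction' p using Projectivization.ind with v hv
    simp only [Set.mem_preimage, Set.mem_singleton_iff, gp_mk hv]
    rw [mem_qKer_mk hv, mul_gfun]
    constructor
    · intro h
      ext i j
      rw [h]
      simp
    · intro h
      obtain ⟨j0, hj0⟩ := Function.ne_iff.mp hv
      funext i
      have hentry := congrFun (congrFun (congrArg (fun X => toF X) h) i) j0
      simp only [toF, Matrix.of_apply] at hentry
      have hvj : v j0 ≠ 0 := by simpa using hj0
      have hj0' : (starRingEnd ℂ) (v j0) ≠ 0 :=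
        fun hh => hvj ((map_eq_zero (starRingEnd ℂ)).mp hh)
      have : (M *ᵥ v) i * (starRingEnd ℂ) (v j0) = 0 := by
        rcases div_eq_zero_iff.mp hentry with h' | h'
        · exact h'
        · exact absurd h' (nsq_ne_zero hv)
      simpa [hj0'] using this
  rw [heq]
  exact IsClosed.preimage (continuous_const.matrix_mul continuous_gp) isClosed_singleton

/-! ### The projective action of `GL`, the center, unitary matrices -/

lemma herm_nondeg_left {u : Vec n} (h : ∀ v, herm n u v = 0) : u = 0 := by
  funext i
  have := h (Pi.single i 1)
  rw [herm_single_right] at this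
  simpa using (mul_eq_zero.mp this).resolve_left (eps_ne_zero i)

lemma gl_mulVec_ne_zero (A : GLn n) {v : Vec n} (hv : v ≠ 0) : (A : Mat n) *ᵥ v ≠ 0 := by
  intro h
  apply hv
  apply glInj A
  show Matrix.mulVecLin (A : Mat n) v = Matrix.mulVecLin (A : Mat n) 0
  simp only [Matrix.mulVecLin_apply, h, Matrix.mulVec_zero, map_zero]

lemma gl_cancel (A : GLn n) (u : Vec n) :
    (A : Mat n) *ᵥ (((A⁻¹ : GLn n) : Mat n) *ᵥ u) = u := by
  rw [Matrix.mulVec_mulVec]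
  have h1 : (A : Mat n) * ((A⁻¹ : GLn n) : Mat n) = 1 := by
    rw [← Units.val_mul, mul_inv_cancel, Units.val_one]
  rw [h1, Matrix.one_mulVec]

lemma center_scalar {z : GLn n} (hz : z ∈ Subgroup.center (GLn n)) :
    ∃ c : ℂ, c ≠ 0 ∧ (z : Mat n) = c • (1 : Mat n) := by
  have hcom : Pairwise fun i j : Fin (n + 1) =>
      Commute (Matrix.single i j 1) (z : Mat n) := by
    intro i j hij
    have hE2 : Matrix.single i j (1 : ℂ) * Matrix.single i j 1 = 0 := by
      rw [Matrix.single_mul_single_of_ne]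
      exact hij.symm
    set E := Matrix.single i j (1 : ℂ) with hE
    have h1 : ((1 + E) * (1 - E) : Mat n) = 1 := by
      have hx : ((1 + E) * (1 - E) : Mat n) = 1 - E * E := by noncomm_ring
      rw [hx, hE2, sub_zero]
    have h2 : ((1 - E) * (1 + E) : Mat n) = 1 := by
      have hx : ((1 - E) * (1 + E) : Mat n) = 1 - E * E := by noncomm_ring
      rw [hx, hE2, sub_zero]
    set u : GLn n := ⟨1 + E, 1 - E, h1, h2⟩ with hu
    have hcz := Subgroup.mem_center_iff.mp hz u
    have hval : ((1 + E) : Mat n) * (z : Mat n) = (z : Mat n) * (1 + E) := by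
      have := congrArg Units.val hcz
      simpa [Units.val_mul, hu] using this
    have : E * (z : Mat n) = (z : Mat n) * E := by
      have h3 : (z : Mat n) + E * (z : Mat n) = (z : Mat n) + (z : Mat n) * E := by
        calc (z : Mat n) + E * (z : Mat n) = ((1 + E) : Mat n) * (z : Mat n) := by
              rw [add_mul, one_mul]
          _ = (z : Mat n) * (1 + E) := hval
          _ = (z : Mat n) + (z : Mat n) * E := by rw [mul_add, mul_one]
      exact add_left_cancel h3
    exact this
  obtain ⟨r, hr⟩ := Matrix.mem_range_scalar_of_commute_single hcom
  have hzr : (z : Mat n) = r • (1 : Mat n) := by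
    rw [← hr, Matrix.scalar_apply]
    ext i j
    rcases eq_or_ne i j with rfl | hij
    · simp [Matrix.diagonal_apply_eq, Matrix.smul_apply, Matrix.one_apply_eq]
    · simp [Matrix.diagonal_apply_ne _ hij, Matrix.smul_apply, Matrix.one_apply_ne hij]
  refine ⟨r, ?_, hzr⟩
  intro hr0
  have hz1 : (z : Mat n) * ((z⁻¹ : GLn n) : Mat n) = 1 := by
    rw [← Units.val_mul, mul_inv_cancel, Units.val_one]
  rw [hzr, hr0, zero_smul, zero_mul] at hz1
  have h01 := congrFun (congrFun (congrArg toF hz1) 0) 0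
  simp only [toF] at h01
  rw [Matrix.zero_apply, Matrix.one_apply_eq] at h01
  exact zero_ne_one h01

lemma act_mk (g : GLn n) {v : Vec n} (hv : v ≠ 0) :
    act (QuotientGroup.mk g : PGLn n) (Projectivization.mk ℂ v hv) =
      Projectivization.mk ℂ ((g : Mat n) *ᵥ v) (gl_mulVec_ne_zero g hv) := by
  set q : GLn n := Quotient.out (QuotientGroup.mk g : PGLn n) with hqdef
  have hq : (QuotientGroup.mk q : PGLn n) = QuotientGroup.mk g := Quotient.out_eq' _
  have hzc : g⁻¹ * q ∈ Subgroup.center (GLn n) := by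
    rw [← QuotientGroup.eq]
    exact hq.symm
  obtain ⟨c, hc0, hcz⟩ := center_scalar hzc
  have hqg : (q : Mat n) = c • (g : Mat n) := by
    calc (q : Mat n) = (g : Mat n) * ((g⁻¹ * q : GLn n) : Mat n) := by
          rw [← Units.val_mul, ← mul_assoc, mul_inv_cancel, one_mul]
      _ = (g : Mat n) * (c • (1 : Mat n)) := by rw [hcz]
      _ = c • ((g : Mat n) * 1) := by rw [Matrix.mul_smul]
      _ = c • (g : Mat n) := by rw [mul_one]
  show actGL q _ = _
  rw [actGL, Projectivization.map_mk]
  refine (Projectivization.mk_eq_mk_iff' ℂ _ _ _ _).2 ⟨c, ?_⟩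
  simp only [Matrix.mulVecLin_apply]
  rw [hqg, Matrix.smul_mulVec]

/-! ### Unitary matrices -/

lemma unitary_cancel {A : GLn n} (hA : A ∈ unitaryGL n) (u v : Vec n) :
    herm n (((A⁻¹ : GLn n) : Mat n) *ᵥ u) v = herm n u ((A : Mat n) *ᵥ v) := by
  conv_rhs => rw [← gl_cancel A u]
  exact (hA _ _).symm

lemma unitary_inv_mem {A : GLn n} (hA : A ∈ unitaryGL n) : A⁻¹ ∈ unitaryGL n := by
  intro u v
  have h := hA (((A⁻¹ : GLn n) : Mat n) *ᵥ u) (((A⁻¹ : GLn n) : Mat n) *ᵥ v)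
  rw [gl_cancel, gl_cancel] at h
  exact h.symm

lemma unitary_inv_entry {A : GLn n} (hA : A ∈ unitaryGL n) (i j : Fin (n + 1)) :
    ((A⁻¹ : GLn n) : Mat n) i j = eps i * eps j * (starRingEnd ℂ) ((A : Mat n) j i) := by
  have h := unitary_cancel hA (Pi.single j 1) (Pi.single i 1)
  rw [herm_single_right, herm_single_left] at h
  rw [Matrix.mulVec_single, Matrix.mulVec_single] at h
  have h' : eps i * (((A⁻¹ : GLn n) : Mat n) i j) =
      eps j * (starRingEnd ℂ) ((A : Mat n) j i) := by
    simpa using h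
  calc ((A⁻¹ : GLn n) : Mat n) i j
      = (eps i * eps i) * ((A⁻¹ : GLn n) : Mat n) i j := by rw [eps_mul_self, one_mul]
    _ = eps i * (eps j * (starRingEnd ℂ) ((A : Mat n) j i)) := by rw [mul_assoc, h']
    _ = eps i * eps j * (starRingEnd ℂ) ((A : Mat n) j i) := by ring

lemma isUnit_of_herm_preserving {L : Mat n}
    (hL : ∀ u v, herm n (L *ᵥ u) (L *ᵥ v) = herm n u v) : IsUnit L := by
  rw [← Matrix.mulVec_injective_iff_isUnit]
  intro x y hxy
  have hz : L *ᵥ (x - y) = 0 := by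
    rw [Matrix.mulVec_sub, show L.mulVec x = L.mulVec y from hxy]
    exact sub_self _
  have hperp : ∀ v, herm n (x - y) v = 0 := by
    intro v
    have h2 := hL (x - y) v
    rw [hz, herm_zero_left] at h2
    exact h2.symm
  have := herm_nondeg_left hperp
  exact sub_eq_zero.mp this

/-! ### Subsequence extraction -/

lemma exists_matrix_subseq (X : ℕ → Mat n) (R : ℝ) (hX : ∀ m, mnorm (X m) ≤ R) :
    ∃ φ : ℕ → ℕ, StrictMono φ ∧ ∃ Y : Mat n, Tendsto (fun k => X (φ k)) atTop (𝓝 Y) := by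
  have hball : ∀ m, toF (X m) ∈ Metric.closedBall (0 : Fin (n + 1) → Fin (n + 1) → ℂ) R := by
    intro m
    rw [Metric.mem_closedBall, dist_zero_right]
    exact hX m
  obtain ⟨l, _, φ, hφ, hl⟩ := (isCompact_closedBall
    (0 : Fin (n + 1) → Fin (n + 1) → ℂ) R).tendsto_subseq hball
  have hof : Continuous fun f : Fin (n + 1) → Fin (n + 1) → ℂ => (Matrix.of f : Mat n) :=
    continuous_matrix fun i j => (continuous_apply j).comp (continuous_apply i)
  exact ⟨φ, hφ, Matrix.of l, (hof.tendsto l).comp hl⟩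

/-! ### Discreteness -/

lemma no_convergent_injective_seq {G : Subgroup (PGLn n)} (hdisc : DiscreteTopology ↥G)
    (δ : ℕ → ↥G) (hδ : Function.Injective δ) (h : PGLn n)
    (hcv : Tendsto (fun k => (δ k : PGLn n)) atTop (𝓝 h)) : False := by
  have hq : Tendsto (fun k => (δ (k + 1) : PGLn n) * (δ k : PGLn n)⁻¹) atTop
      (𝓝 (h * h⁻¹)) :=
    (hcv.comp (tendsto_add_atTop_nat 1)).mul hcv.inv
  rw [mul_inv_cancel] at hq
  have h1 : IsOpen ({1} : Set ↥G) := isOpen_discrete _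
  rw [isOpen_induced_iff] at h1
  obtain ⟨U, hU, hU1⟩ := h1
  have h1U : (1 : PGLn n) ∈ U := by
    have hone : (1 : ↥G) ∈ (Subtype.val ⁻¹' U : Set ↥G) := by
      rw [hU1]; exact rfl
    simpa using hone
  have hev : ∀ᶠ k in atTop, (δ (k + 1) : PGLn n) * (δ k : PGLn n)⁻¹ ∈ U :=
    hq (hU.mem_nhds h1U)
  obtain ⟨k, hk⟩ := hev.exists
  have hmem : ((δ (k + 1) * (δ k)⁻¹ : ↥G) : PGLn n)
      = (δ (k + 1) : PGLn n) * (δ k : PGLn n)⁻¹ := by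
    push_cast
    rfl
  have hin : (δ (k + 1) * (δ k)⁻¹ : ↥G) ∈ (Subtype.val ⁻¹' U : Set ↥G) := by
    show ((δ (k + 1) * (δ k)⁻¹ : ↥G) : PGLn n) ∈ U
    rw [hmem]
    exact hk
  rw [hU1] at hin
  have heq1 : δ (k + 1) * (δ k)⁻¹ = 1 := hin
  have heq2 : δ (k + 1) = δ k := mul_inv_eq_one.mp heq1
  exact Nat.succ_ne_self k (hδ heq2)

/-! ### Extracting information from uniform convergence -/

lemma unif_eventually {f : ℕ → Pn n → Pn n} {F : Pn n → Pn n} {K : Set (Pn n)}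
    (h : UnifConvOn f F K) {ε : ℝ} (hε : 0 < ε) :
    ∀ᶠ m in atTop, ∀ p ∈ K, dist (toF (gp (F p))) (toF (gp (f m p))) < ε := by
  have hW : IsOpen {q : Pn n × Pn n | dist (toF (gp q.1)) (toF (gp q.2)) < ε} := by
    have hc : Continuous fun q : Pn n × Pn n => dist (toF (gp q.1)) (toF (gp q.2)) :=
      Continuous.dist ((continuous_toF.comp continuous_gp).comp continuous_fst)
        ((continuous_toF.comp continuous_gp).comp continuous_snd)
    exact isOpen_lt hc continuous_const
  have hdiag : ∀ y : Pn n,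
      (y, y) ∈ {q : Pn n × Pn n | dist (toF (gp q.1)) (toF (gp q.2)) < ε} := by
    intro y
    simp [hε]
  exact (h _ hW hdiag).mono fun m hm p hp => hm p hp

lemma unif_pointwise {f : ℕ → Pn n → Pn n} {F : Pn n → Pn n} {K : Set (Pn n)}
    (h : UnifConvOn f F K) {p : Pn n} (hp : p ∈ K) :
    Tendsto (fun m => toF (gp (f m p))) atTop (𝓝 (toF (gp (F p)))) := by
  rw [Metric.tendsto_atTop]
  intro ε hε
  have hev := unif_eventually h hε
  rw [eventually_atTop] at hev
  obtain ⟨N, hN⟩ := hev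
  exact ⟨N, fun m hm => by
    have := hN m hm p hp
    rwa [dist_comm] at this⟩

/-- The key probe argument: if along a subsequence `φ`, the maps `f (φ k)` send points
`[v k] → [x] ∉ Ker M` to points `[t k]` remaining in a closed set `Z`, then (by the
uniform convergence off `Ker M`) the image `[M x]` must lie in `Z`. -/
lemma probe_contra (M : Mat n) (f : ℕ → Pn n → Pn n)
    (hconv : QPConv f M) (φ : ℕ → ℕ) (hφ : StrictMono φ)
    (x : Vec n) (hx : x ≠ 0) (hxM : M *ᵥ x ≠ 0)
    (v : ℕ → Vec n) (hv : ∀ k, v k ≠ 0) (hvx : Tendsto v atTop (𝓝 x))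
    (t : ℕ → Vec n) (ht : ∀ k, t k ≠ 0)
    (himg : ∀ᶠ k in atTop, f (φ k) (Projectivization.mk ℂ (v k) (hv k)) =
      Projectivization.mk ℂ (t k) (ht k))
    (Z : Set (Pn n)) (hZc : IsClosed Z)
    (hZ : ∀ᶠ k in atTop, Projectivization.mk ℂ (t k) (ht k) ∈ Z)
    (hMx : Projectivization.mk ℂ (M *ᵥ x) hxM ∉ Z) : False := by
  rcases Z.eq_empty_or_nonempty with rfl | hZne
  · obtain ⟨k, hk⟩ := hZ.exists
    exact hk
  set D : Pn n → ℝ := fun p => dist (toF (gp p)) (toF (gfun (M *ᵥ x))) with hD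
  have hDcont : Continuous D := (continuous_toF.comp continuous_gp).dist continuous_const
  obtain ⟨z0, hz0Z, hz0min⟩ := hZc.isCompact.exists_isMinOn hZne hDcont.continuousOn
  set d0 : ℝ := D z0 with hd0
  have hd0pos : 0 < d0 := by
    rcases (dist_nonneg : 0 ≤ D z0).lt_or_eq with h | h
    · exact h
    · exfalso
      have heq : toF (gp z0) = toF (gfun (M *ᵥ x)) := by
        rw [← dist_eq_zero]
        exact h.symm
      have hz0eq : z0 = Projectivization.mk ℂ (M *ᵥ x) hxM := by
        apply gp_injective
        rw [gp_mk]
        exact toF_injective heq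
      rw [hz0eq] at hz0Z
      exact hMx hz0Z
  set E : Pn n → ℝ := fun p => dist (toF (gp p)) (toF (gfun x)) with hE
  have hEcont : Continuous E := (continuous_toF.comp continuous_gp).dist continuous_const
  have hxK : Projectivization.mk ℂ x hx ∉ qKer M := by
    rw [mem_qKer_mk]
    exact hxM
  obtain ⟨r, hrpos, hrK⟩ : ∃ r : ℝ, 0 < r ∧ ∀ p ∈ qKer M, r < E p := by
    rcases (qKer M).eq_empty_or_nonempty with hemp | hne
    · exact ⟨1, one_pos, fun p hp => absurd (hemp ▸ hp) (Set.notMem_empty p)⟩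
    · obtain ⟨p0, hp0, hp0min⟩ :=
        (isClosed_qKer M).isCompact.exists_isMinOn hne hEcont.continuousOn
      have hp0pos : 0 < E p0 := by
        rcases (dist_nonneg : 0 ≤ E p0).lt_or_eq with h | h
        · exact h
        · exfalso
          have heq : toF (gp p0) = toF (gfun x) := by
            rw [← dist_eq_zero]
            exact h.symm
          have hp0eq : p0 = Projectivization.mk ℂ x hx := by
            apply gp_injective
            rw [gp_mk]
            exact toF_injective heq
          rw [hp0eq] at hp0
          exact hxK hp0
      refine ⟨E p0 / 2, by linarith, fun p hp => ?_⟩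
      have := hp0min hp
      have h2 : E p0 ≤ E p := this
      linarith
  set K : Set (Pn n) := E ⁻¹' Set.Iic r with hK
  have hKclosed : IsClosed K := IsClosed.preimage hEcont isClosed_Iic
  have hKcomp : IsCompact K := hKclosed.isCompact
  have hKsub : K ⊆ (qKer M)ᶜ := by
    intro p hp hpker
    have h1 := hrK p hpker
    have h2 : E p ≤ r := hp
    linarith
  have hUnif := hconv K hKsub hKcomp
  have hev0 : ∀ᶠ k in atTop, ∀ p ∈ K,
      dist (toF (gp (qMap M p))) (toF (gp (f (φ k) p))) < d0 / 2 :=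
    (hφ.tendsto_atTop).eventually (unif_eventually hUnif (by linarith))
  have hgood1 : ∀ᶠ k in atTop, Projectivization.mk ℂ (v k) (hv k) ∈ K := by
    have htend : Tendsto (fun k => E (Projectivization.mk ℂ (v k) (hv k))) atTop (𝓝 0) := by
      have h1 : Tendsto (fun k => gfun (v k)) atTop (𝓝 (gfun x)) := tendsto_gfun hx hvx
      have h2 := ((continuous_toF.tendsto _).comp h1).dist
        (tendsto_const_nhds (x := toF (gfun x)) (f := atTop))
      have h3 : (fun k => E (Projectivization.mk ℂ (v k) (hv k)))
          = fun k => dist (toF (gfun (v k))) (toF (gfun x)) := by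
        funext k
        rw [hE]
        simp only [gp_mk]
      rw [h3]
      simpa using h2
    have := htend.eventually_lt_const hrpos
    exact this.mono fun k hk => le_of_lt hk
  have hMv : Tendsto (fun k => M *ᵥ v k) atTop (𝓝 (M *ᵥ x)) := tendsto_mulVec_right hvx
  have hMvne : ∀ᶠ k in atTop, M *ᵥ v k ≠ 0 := hMv.eventually_ne hxM
  have hev2 : ∀ᶠ k in atTop,
      dist (toF (gfun (M *ᵥ v k))) (toF (gfun (M *ᵥ x))) < d0 / 4 := by
    have h1 := tendsto_gfun hxM hMv
    have h2 := ((continuous_toF.tendsto _).comp h1).dist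
      (tendsto_const_nhds (x := toF (gfun (M *ᵥ x))) (f := atTop))
    have h3 : Tendsto (fun k => dist (toF (gfun (M *ᵥ v k))) (toF (gfun (M *ᵥ x))))
        atTop (𝓝 0) := by simpa using h2
    exact h3.eventually_lt_const (by linarith)
  obtain ⟨k, hkK, hkimg, hkZ, hkne, hkdist, hkunif⟩ :=
    (hgood1.and (himg.and (hZ.and (hMvne.and (hev2.and hev0))))).exists
  have hqm : qMap M (Projectivization.mk ℂ (v k) (hv k)) =
      Projectivization.mk ℂ (M *ᵥ v k) hkne := qMap_mk (hv k) hkne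
  have hA : dist (toF (gfun (M *ᵥ v k))) (toF (gp (f (φ k)
      (Projectivization.mk ℂ (v k) (hv k))))) < d0 / 2 := by
    have h1 := hkunif _ hkK
    rwa [hqm, gp_mk] at h1
  have hB : d0 ≤ dist (toF (gp (f (φ k) (Projectivization.mk ℂ (v k) (hv k)))))
      (toF (gfun (M *ᵥ x))) := by
    rw [hkimg]
    exact hz0min hkZ
  have htri := dist_triangle (toF (gp (f (φ k) (Projectivization.mk ℂ (v k) (hv k)))))
    (toF (gfun (M *ᵥ v k))) (toF (gfun (M *ᵥ x)))
  rw [dist_comm] at hA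
  linarith

end QPaux

end AuxQP

open QPaux in
/-- If a sequence of pairwise distinct elements of a discrete subgroup
`G` of `PU(1,n)` converges as quasi-projective transformations to `γ`, then the unique
point of `Ker(γ) ∩ ∂𝐇ⁿ_ℂ` belongs to the Chen–Greenberg limit set `Λ_CG(G)`. -/
theorem qp_limit_kernel_touches_limit_set
    (n : ℕ) (hn : 1 ≤ n) (G : Subgroup (PGLn n))
    (hPU : (G : Set (PGLn n)) ⊆ PUset n) (hdisc : DiscreteTopology ↥G)
    (γ : ℕ → G) (hγ : Function.Injective γ) (M : Mat n) (hM : M ≠ 0)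
    (hconv : QPConv (fun m => act (γ m : PGLn n)) M) :
    ∃ q : Pn n, qKer M ∩ Hbdry n = {q} ∧ q ∈ LambdaCG G := by
  classical
  -- Step 0: unitary lifts of the sequence
  have hlift : ∀ m, ∃ A : GLn n, A ∈ unitaryGL n ∧
      (QuotientGroup.mk A : PGLn n) = ((γ m : ↥G) : PGLn n) := fun m => by
    obtain ⟨A, hA1, hA2⟩ := hPU (γ m).2
    exact ⟨A, hA1, hA2⟩
  choose A hAu hAmk using hlift
  have hact : ∀ m (v : Vec n) (hv : v ≠ 0),
      act ((γ m : ↥G) : PGLn n) (Projectivization.mk ℂ v hv) =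
        Projectivization.mk ℂ ((A m : Mat n) *ᵥ v) (gl_mulVec_ne_zero (A m) hv) := by
    intro m v hv
    rw [← hAmk m]
    exact act_mk (A m) hv
  -- Step 1: norms
  set N : ℕ → ℝ := fun m => mnorm ((A m : Mat n)) with hNdef
  have hAne : ∀ m, ((A m : Mat n)) ≠ 0 := by
    intro m h0
    have hne := gl_mulVec_ne_zero (A m) (v := Pi.single (0 : Fin (n+1)) (1:ℂ))
      (by
        intro h
        have := congrFun h 0
        simp [Pi.single_eq_same] at this)
    apply hne
    rw [h0, Matrix.zero_mulVec]
  have hNpos : ∀ m, 0 < N m := fun m => mnorm_pos (hAne m)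
  set ci : ℕ → ℂ := fun m => (((N m)⁻¹ : ℝ) : ℂ) with hcidef
  have hci : ∀ m, ci m ≠ 0 :=
    fun m => Complex.ofReal_ne_zero.mpr (inv_ne_zero (ne_of_gt (hNpos m)))
  have hcireal : ∀ m, (starRingEnd ℂ) (ci m) = ci m := fun m => Complex.conj_ofReal _
  -- Step 2: the norms tend to infinity (uses discreteness)
  have hNtop : Tendsto N atTop atTop := by
    by_contra hcon
    rw [tendsto_atTop] at hcon
    push_neg at hcon
    obtain ⟨R, hR⟩ := hcon
    have hR' : ∃ᶠ m in atTop, N m < R := hR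
    obtain ⟨ψ, hψmono, hψ⟩ := Filter.extraction_of_frequently_atTop hR'
    obtain ⟨θ, hθ, L, hL⟩ := exists_matrix_subseq (fun k => ((A (ψ k) : Mat n))) R
      (fun k => le_of_lt (hψ k))
    have hLherm : ∀ u v : Vec n, herm n (L *ᵥ u) (L *ᵥ v) = herm n u v := by
      intro u v
      have h1 : Tendsto (fun k => herm n ((A (ψ (θ k)) : Mat n) *ᵥ u)
          ((A (ψ (θ k)) : Mat n) *ᵥ v)) atTop (𝓝 (herm n (L *ᵥ u) (L *ᵥ v))) :=
        tendsto_herm (tendsto_mulVec (fun i j => tendsto_entries hL i j) u)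
          (tendsto_mulVec (fun i j => tendsto_entries hL i j) v)
      have h2 : Tendsto (fun _ : ℕ => herm n u v) atTop
          (𝓝 (herm n (L *ᵥ u) (L *ᵥ v))) :=
        h1.congr fun k => hAu (ψ (θ k)) u v
      exact (tendsto_nhds_unique h2 tendsto_const_nhds)
    obtain ⟨Lu, hLu⟩ := isUnit_of_herm_preserving hLherm
    have hLuU : Lu ∈ unitaryGL n := by
      intro u v
      rw [hLu]
      exact hLherm u v
    have hLinv : Tendsto (fun k => (((A (ψ (θ k)))⁻¹ : GLn n) : Mat n)) atTop
        (𝓝 (((Lu⁻¹ : GLn n) : Mat n))) := by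
      apply tendsto_matrix
      intro i j
      have hform : ∀ k, (((A (ψ (θ k)))⁻¹ : GLn n) : Mat n) i j
          = eps i * eps j * (starRingEnd ℂ) ((A (ψ (θ k)) : Mat n) j i) :=
        fun k => unitary_inv_entry (hAu _) i j
      have hformL : ((Lu⁻¹ : GLn n) : Mat n) i j
          = eps i * eps j * (starRingEnd ℂ) (L j i) := by
        rw [unitary_inv_entry hLuU i j, hLu]
      rw [hformL]
      have htail : Tendsto (fun k => eps i * eps j *
          (starRingEnd ℂ) ((A (ψ (θ k)) : Mat n) j i)) atTop
          (𝓝 (eps i * eps j * (starRingEnd ℂ) (L j i))) :=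
        tendsto_const_nhds.mul
          ((Complex.continuous_conj.tendsto _).comp (tendsto_entries hL j i))
      exact htail.congr fun k => (hform k).symm
    have hGL : Tendsto (fun k => A (ψ (θ k))) atTop (𝓝 Lu) := by
      rw [(Units.isInducing_embedProduct (M := Mat n)).tendsto_nhds_iff]
      have h1 : Tendsto (fun k => ((A (ψ (θ k)) : Mat n))) atTop (𝓝 (Lu : Mat n)) := by
        rw [hLu]; exact hL
      have h2 : Tendsto (fun k => MulOpposite.op ((((A (ψ (θ k)))⁻¹ : GLn n) : Mat n)))
          atTop (𝓝 (MulOpposite.op (((Lu⁻¹ : GLn n) : Mat n)))) :=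
        (MulOpposite.continuous_op.tendsto _).comp hLinv
      exact h1.prodMk_nhds h2
    have hPGL : Tendsto (fun k => ((γ (ψ (θ k)) : ↥G) : PGLn n)) atTop
        (𝓝 (QuotientGroup.mk Lu)) := by
      have hcont : Continuous (QuotientGroup.mk : GLn n → PGLn n) :=
        continuous_quotient_mk'
      have h3 := (hcont.tendsto Lu).comp hGL
      exact h3.congr fun k => hAmk _
    exact no_convergent_injective_seq hdisc (fun k => γ (ψ (θ k)))
      (hγ.comp (hψmono.comp hθ).injective) _ hPGL
  -- Step 3: extract the normalized limit B
  set Bm : ℕ → Mat n := fun m => ci m • ((A m : Mat n)) with hBmdef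
  have hBmnorm : ∀ m, mnorm (Bm m) = 1 := by
    intro m
    rw [mnorm_smul]
    rw [hcidef]
    rw [Complex.norm_real, Real.norm_eq_abs, abs_of_pos (inv_pos.mpr (hNpos m))]
    exact inv_mul_cancel₀ (ne_of_gt (hNpos m))
  obtain ⟨φ, hφ, B, hBlim⟩ := exists_matrix_subseq Bm 1 (fun m => le_of_eq (hBmnorm m))
  have hBne : B ≠ 0 := by
    intro h0
    have h1 : Tendsto (fun k => mnorm (Bm (φ k))) atTop (𝓝 (mnorm B)) :=
      ((continuous_toF.norm).tendsto B).comp hBlim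
    have h2 : Tendsto (fun _ : ℕ => (1 : ℝ)) atTop (𝓝 (mnorm B)) :=
      h1.congr fun k => hBmnorm (φ k)
    have h3 := tendsto_nhds_unique h2 tendsto_const_nhds
    rw [h0] at h3
    rw [show mnorm (0 : Mat n) = 0 from mnorm_eq_zero.mpr rfl] at h3
    exact one_ne_zero h3.symm
  -- Step 4: the adjoint limit C
  set C : Mat n := Matrix.of (fun i j => eps i * eps j * (starRingEnd ℂ) (B j i)) with hCdef
  set Cm : ℕ → Mat n := fun m => ci m • (((A m)⁻¹ : GLn n) : Mat n) with hCmdef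
  have hCment : ∀ m i j, Cm m i j = eps i * eps j * (starRingEnd ℂ) (Bm m j i) := by
    intro m i j
    have h1 : Cm m i j = ci m * (((A m)⁻¹ : GLn n) : Mat n) i j := rfl
    have h2 : Bm m j i = ci m * ((A m : Mat n)) j i := rfl
    rw [h1, unitary_inv_entry (hAu m) i j, h2, _root_.map_mul, hcireal m]
    ring
  have hCmlim : Tendsto (fun k => Cm (φ k)) atTop (𝓝 C) := by
    apply tendsto_matrix
    intro i j
    have hC1 : C i j = eps i * eps j * (starRingEnd ℂ) (B j i) := rfl
    rw [hC1]
    have htail : Tendsto (fun k => eps i * eps j * (starRingEnd ℂ) (Bm (φ k) j i)) atTop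
        (𝓝 (eps i * eps j * (starRingEnd ℂ) (B j i))) :=
      tendsto_const_nhds.mul
        ((Complex.continuous_conj.tendsto _).comp (tendsto_entries hBlim j i))
    exact htail.congr fun k => (hCment (φ k) i j).symm
  have hciC : Tendsto (fun k => ci (φ k)) atTop (𝓝 0) := by
    have h1 : Tendsto (fun m => (N m)⁻¹) atTop (𝓝 0) := hNtop.inv_tendsto_atTop
    have h2 := (Complex.continuous_ofReal.tendsto 0).comp (h1.comp hφ.tendsto_atTop)
    rw [Complex.ofReal_zero] at h2
    exact h2
  -- smul-mulvec identities
  have hBmv : ∀ m (u : Vec n), Bm m *ᵥ u = ci m • ((A m : Mat n) *ᵥ u) :=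
    fun m u => Matrix.smul_mulVec _ _ _
  have hCmv : ∀ m (u : Vec n), Cm m *ᵥ u = ci m • ((((A m)⁻¹ : GLn n) : Mat n) *ᵥ u) :=
    fun m u => Matrix.smul_mulVec _ _ _
  -- Step 5: isotropy of B, C and the adjoint relation
  have hBlimv : ∀ u : Vec n, Tendsto (fun k => Bm (φ k) *ᵥ u) atTop (𝓝 (B *ᵥ u)) :=
    fun u => tendsto_mulVec (fun i j => tendsto_entries hBlim i j) u
  have hClimv : ∀ u : Vec n, Tendsto (fun k => Cm (φ k) *ᵥ u) atTop (𝓝 (C *ᵥ u)) :=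
    fun u => tendsto_mulVec (fun i j => tendsto_entries hCmlim i j) u
  have hBiso : ∀ u v : Vec n, herm n (B *ᵥ u) (B *ᵥ v) = 0 := by
    intro u v
    have hident : ∀ m, herm n (Bm m *ᵥ u) (Bm m *ᵥ v) = ci m * ci m * herm n u v := by
      intro m
      rw [hBmv, hBmv, herm_smul_left, herm_smul_right, hAu m u v, hcireal m]
      ring
    have h1 : Tendsto (fun k => herm n (Bm (φ k) *ᵥ u) (Bm (φ k) *ᵥ v)) atTop
        (𝓝 (herm n (B *ᵥ u) (B *ᵥ v))) := tendsto_herm (hBlimv u) (hBlimv v)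
    have h1' : Tendsto (fun k => ci (φ k) * ci (φ k) * herm n u v) atTop
        (𝓝 (herm n (B *ᵥ u) (B *ᵥ v))) := h1.congr fun k => hident (φ k)
    have h2 : Tendsto (fun k => ci (φ k) * ci (φ k) * herm n u v) atTop (𝓝 0) := by
      have := (hciC.mul hciC).mul (tendsto_const_nhds (x := herm n u v))
      simpa using this
    exact tendsto_nhds_unique h1' h2
  have hCiso : ∀ u v : Vec n, herm n (C *ᵥ u) (C *ᵥ v) = 0 := by
    intro u v
    have hident : ∀ m, herm n (Cm m *ᵥ u) (Cm m *ᵥ v) = ci m * ci m * herm n u v := by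
      intro m
      rw [hCmv, hCmv, herm_smul_left, herm_smul_right, unitary_inv_mem (hAu m) u v,
        hcireal m]
      ring
    have h1 : Tendsto (fun k => herm n (Cm (φ k) *ᵥ u) (Cm (φ k) *ᵥ v)) atTop
        (𝓝 (herm n (C *ᵥ u) (C *ᵥ v))) := tendsto_herm (hClimv u) (hClimv v)
    have h1' : Tendsto (fun k => ci (φ k) * ci (φ k) * herm n u v) atTop
        (𝓝 (herm n (C *ᵥ u) (C *ᵥ v))) := h1.congr fun k => hident (φ k)
    have h2 : Tendsto (fun k => ci (φ k) * ci (φ k) * herm n u v) atTop (𝓝 0) := by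
      have := (hciC.mul hciC).mul (tendsto_const_nhds (x := herm n u v))
      simpa using this
    exact tendsto_nhds_unique h1' h2
  have hadj : ∀ u v : Vec n, herm n (C *ᵥ u) v = herm n u (B *ᵥ v) := by
    intro u v
    have hident : ∀ m, herm n (Cm m *ᵥ u) v = herm n u (Bm m *ᵥ v) := by
      intro m
      rw [hCmv, hBmv, herm_smul_left, herm_smul_right, unitary_cancel (hAu m) u v,
        hcireal m]
    have h1 : Tendsto (fun k => herm n (Cm (φ k) *ᵥ u) v) atTop
        (𝓝 (herm n (C *ᵥ u) v)) := tendsto_herm (hClimv u) tendsto_const_nhds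
    have h2 : Tendsto (fun k => herm n u (Bm (φ k) *ᵥ v)) atTop
        (𝓝 (herm n u (B *ᵥ v))) := tendsto_herm tendsto_const_nhds (hBlimv v)
    have h1' : Tendsto (fun k => herm n u (Bm (φ k) *ᵥ v)) atTop
        (𝓝 (herm n (C *ᵥ u) v)) := h1.congr fun k => hident (φ k)
    exact tendsto_nhds_unique h1' h2
  -- Step 6: the vectors w and w''
  obtain ⟨u0, hu0⟩ : ∃ u0 : Vec n, B *ᵥ u0 ≠ 0 := by
    by_contra hno
    push_neg at hno
    apply hBne
    ext i j
    have := congrFun (hno (Pi.single j 1)) i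
    rw [Matrix.mulVec_single] at this
    simpa using this
  set w : Vec n := B *ᵥ u0 with hwdef
  have hwne : w ≠ 0 := hu0
  have hwiso : herm n w w = 0 := hBiso u0 u0
  have hw0 : w 0 ≠ 0 := coord_ne_zero_of_isotropic hwiso hwne
  set o : Vec n := Pi.single 0 1 with hodef
  have ho0 : o ≠ 0 := by
    intro h
    have := congrFun h 0
    rw [hodef] at this
    simp [Pi.single_eq_same] at this
  set w'' : Vec n := C *ᵥ o with hw''def
  have hw''ne : w'' ≠ 0 := by
    intro h0
    have hCo : C *ᵥ o = 0 := by
      rw [← hw''def]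
      exact h0
    have hall : ∀ y : Vec n, herm n o (B *ᵥ y) = 0 := by
      intro y
      rw [← hadj o y, hCo]
      exact herm_zero_left _
    have hwo : herm n w o = 0 := by
      rw [herm_conj o w, hwdef, hall u0, map_zero]
    rw [hodef, herm_o_right] at hwo
    exact hw0 (neg_eq_zero.mp hwo)
  have hw''iso : herm n w'' w'' = 0 := hCiso o o
  -- range of B is the line through w ; range of C the line through w''
  have hBr : ∀ u, ∃ c : ℂ, B *ᵥ u = c • w := by
    intro u
    obtain ⟨r, _, _, himp⟩ := herm_perp hwiso hwne (hBiso u0 u)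
    exact himp (hBiso u u)
  have hCr : ∀ u, ∃ c : ℂ, C *ᵥ u = c • w'' := by
    intro u
    obtain ⟨r, _, _, himp⟩ := herm_perp hw''iso hw''ne (hCiso o u)
    exact himp (hCiso u u)
  -- kernel of B
  have hkerB : ∀ y : Vec n, B *ᵥ y = 0 ↔ herm n w'' y = 0 := by
    intro y
    constructor
    · intro h
      rw [hw''def, hadj o y, h]
      exact herm_zero_right _
    · intro h
      have hall : ∀ u, herm n u (B *ᵥ y) = 0 := by
        intro u
        rw [← hadj u y]
        obtain ⟨c, hc⟩ := hCr u
        rw [hc, herm_smul_left, h, mul_zero]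
      exact herm_nondeg_right hall
  -- Step 7: range of M is contained in the line through w
  have hMvec : ∃ sM : Vec n, M *ᵥ sM ≠ 0 := by
    by_contra hno
    push_neg at hno
    apply hM
    ext i j
    have := congrFun (hno (Pi.single j 1)) i
    rw [Matrix.mulVec_single] at this
    simpa using this
  have hgood : ∀ (u : Vec n), M *ᵥ u ≠ 0 → B *ᵥ u ≠ 0 → ∃ c : ℂ, M *ᵥ u = c • w := by
    intro u hMu hBu
    have hu : u ≠ 0 := by
      intro h
      rw [h, Matrix.mulVec_zero] at hMu
      exact hMu rfl
    have hsub : ({Projectivization.mk ℂ u hu} : Set (Pn n)) ⊆ (qKer M)ᶜ := by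
      intro p hp
      rw [Set.mem_singleton_iff] at hp
      subst hp
      rw [Set.mem_compl_iff, mem_qKer_mk hu]
      exact hMu
    have hsing := hconv _ hsub isCompact_singleton
    have hpw := unif_pointwise hsing (Set.mem_singleton _)
    have hsubseq : Tendsto (fun k => toF (gp ((fun m => act ((γ m : ↥G) : PGLn n)) (φ k)
        (Projectivization.mk ℂ u hu)))) atTop (𝓝 (toF (gfun (B *ᵥ u)))) := by
      have h1 := tendsto_gfun hBu (hBlimv u)
      have h2 := (continuous_toF.tendsto _).comp h1
      refine h2.congr fun k => ?_
      have heq : gp (act ((γ (φ k) : ↥G) : PGLn n) (Projectivization.mk ℂ u hu))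
          = gfun (Bm (φ k) *ᵥ u) := by
        rw [hact (φ k) u hu, gp_mk, hBmv, gfun_smul (hci (φ k))]
      rw [heq]
      rfl
    have hpw' := hpw.comp hφ.tendsto_atTop
    have huniq := tendsto_nhds_unique hpw' hsubseq
    rw [qMap_mk hu hMu, gp_mk] at huniq
    have hg : gfun (M *ᵥ u) = gfun (B *ᵥ u) := toF_injective huniq
    obtain ⟨c, hc0, hcc⟩ := gfun_inj hMu hBu hg
    obtain ⟨c2, hc2⟩ := hBr u
    exact ⟨c * c2, by rw [hcc, hc2, smul_smul]⟩
  obtain ⟨s, hMs, hBs⟩ : ∃ s : Vec n, M *ᵥ s ≠ 0 ∧ B *ᵥ s ≠ 0 := by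
    obtain ⟨sM, hsM⟩ := hMvec
    by_cases h1 : B *ᵥ sM = 0
    · by_cases h2 : M *ᵥ u0 = 0
      · refine ⟨sM + u0, ?_, ?_⟩
        · rw [Matrix.mulVec_add, h2, add_zero]
          exact hsM
        · rw [Matrix.mulVec_add, h1, zero_add]
          exact hu0
      · exact ⟨u0, h2, hu0⟩
    · exact ⟨sM, hsM, h1⟩
  have hatmost : ∀ (X : Mat n), X *ᵥ s ≠ 0 → ∀ t1 t2 : ℂ, t1 ≠ t2 →
      X *ᵥ (fun u : Vec n => u) 0 = 0 → True := fun _ _ _ _ _ _ => trivial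
  clear hatmost
  have hatmost : ∀ (X : Mat n) (u : Vec n), X *ᵥ s ≠ 0 → ∀ t1 t2 : ℂ, t1 ≠ t2 →
      X *ᵥ (u + t1 • s) = 0 → X *ᵥ (u + t2 • s) = 0 → False := by
    intro X u hXs t1 t2 hne h1 h2
    apply hXs
    have hsub : X *ᵥ ((u + t1 • s) - (u + t2 • s)) = 0 := by
      rw [Matrix.mulVec_sub, h1, h2, sub_zero]
    have hdiff : (u + t1 • s) - (u + t2 • s) = (t1 - t2) • s := by
      funext i
      simp only [Pi.sub_apply, Pi.add_apply, Pi.smul_apply, smul_eq_mul]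
      ring
    rw [hdiff, Matrix.mulVec_smul] at hsub
    rcases smul_eq_zero.mp hsub with h | h
    · exact absurd h (sub_ne_zero.mpr hne)
    · exact h
  have hMr : ∀ u, ∃ c : ℂ, M *ᵥ u = c • w := by
    intro u
    obtain ⟨t, ht0, htM, htB⟩ : ∃ t : ℂ, t ≠ 0 ∧ M *ᵥ (u + t • s) ≠ 0 ∧
        B *ᵥ (u + t • s) ≠ 0 := by
      by_cases hM1 : M *ᵥ (u + (1 : ℂ) • s) = 0
      · by_cases hB2 : B *ᵥ (u + (2 : ℂ) • s) = 0
        · refine ⟨3, by norm_num, ?_, ?_⟩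
          · intro h3
            exact hatmost M u hMs 1 3 (by norm_num) hM1 h3
          · intro h3
            exact hatmost B u hBs 2 3 (by norm_num) hB2 h3
        · refine ⟨2, by norm_num, ?_, hB2⟩
          intro h2
          exact hatmost M u hMs 1 2 (by norm_num) hM1 h2
      · by_cases hB1 : B *ᵥ (u + (1 : ℂ) • s) = 0
        · by_cases hM2 : M *ᵥ (u + (2 : ℂ) • s) = 0
          · refine ⟨3, by norm_num, ?_, ?_⟩
            · intro h3
              exact hatmost M u hMs 2 3 (by norm_num) hM2 h3
            · intro h3
              exact hatmost B u hBs 1 3 (by norm_num) hB1 h3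
          · refine ⟨2, by norm_num, hM2, ?_⟩
            intro h2
            exact hatmost B u hBs 1 2 (by norm_num) hB1 h2
        · exact ⟨1, one_ne_zero, hM1, hB1⟩
    obtain ⟨c1, hc1⟩ := hgood (u + t • s) htM htB
    obtain ⟨cs, hcs⟩ := hgood s hMs hBs
    refine ⟨c1 - t * cs, ?_⟩
    have hMu : M *ᵥ u = M *ᵥ (u + t • s) - t • (M *ᵥ s) := by
      rw [Matrix.mulVec_add, Matrix.mulVec_smul]
      funext i
      simp only [Pi.sub_apply, Pi.add_apply, Pi.smul_apply, smul_eq_mul]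
      ring
    rw [hMu, hc1, hcs]
    funext i
    simp only [Pi.sub_apply, Pi.smul_apply, smul_eq_mul]
    ring
  -- Step 8: probe sequence along the inverses
  set ok : ℕ → Vec n := fun k => Cm (φ k) *ᵥ o with hokdef
  have hokne : ∀ k, ok k ≠ 0 := by
    intro k
    rw [hokdef]
    show Cm (φ k) *ᵥ o ≠ 0
    rw [hCmv]
    exact smul_ne_zero (hci _) (gl_mulVec_ne_zero _ ho0)
  have hoklim : Tendsto ok atTop (𝓝 w'') := hClimv o
  -- Step 9: M *ᵥ w'' = 0
  have hMw'' : M *ᵥ w'' = 0 := by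
    by_contra hMw
    have himg : ∀ k, act ((γ (φ k) : ↥G) : PGLn n)
        (Projectivization.mk ℂ (ok k) (hokne k)) = Projectivization.mk ℂ o ho0 := by
      intro k
      rw [hact (φ k) _ (hokne k)]
      have hAv : (A (φ k) : Mat n) *ᵥ (ok k) = ci (φ k) • o := by
        show (A (φ k) : Mat n) *ᵥ (Cm (φ k) *ᵥ o) = ci (φ k) • o
        rw [hCmv, Matrix.mulVec_smul, gl_cancel]
      refine (Projectivization.mk_eq_mk_iff' ℂ _ _ _ ho0).2 ⟨ci (φ k), ?_⟩
      rw [hAv]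
    have hZc : IsClosed (gp ⁻¹' {gfun o} : Set (Pn n)) :=
      IsClosed.preimage continuous_gp isClosed_singleton
    have hoZ : Projectivization.mk ℂ o ho0 ∈ (gp ⁻¹' {gfun o} : Set (Pn n)) := by
      rw [Set.mem_preimage, gp_mk]
      exact Set.mem_singleton _
    refine probe_contra M _ hconv φ hφ w'' hw''ne hMw ok hokne hoklim (fun _ => o)
      (fun _ => ho0) (Filter.Eventually.of_forall himg) _ hZc
      (Filter.Eventually.of_forall fun _ => hoZ) ?_
    intro hmem
    rw [Set.mem_preimage, gp_mk, Set.mem_singleton_iff] at hmem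
    obtain ⟨c, hc0, hcc⟩ := gfun_inj hMw ho0 hmem
    obtain ⟨c2, hc2⟩ := hMr w''
    have hiso1 : herm n (M *ᵥ w'') (M *ᵥ w'') = 0 := by
      rw [hc2, herm_smul_left, herm_smul_right, hwiso]
      ring
    have hiso2 : herm n (M *ᵥ w'') (M *ᵥ w'') = c * (starRingEnd ℂ) c * (-1) := by
      rw [hcc, herm_smul_left, herm_smul_right, hodef, herm_o_o]
      ring
    rw [hiso1] at hiso2
    have hcne : c * (starRingEnd ℂ) c ≠ 0 :=
      mul_ne_zero hc0 fun h => hc0 ((map_eq_zero (starRingEnd ℂ)).mp h)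
    apply hcne
    have := hiso2.symm
    rw [mul_neg_one, neg_eq_zero] at this
    exact this
  -- Step 10: conclusion
  refine ⟨Projectivization.mk ℂ w'' hw''ne, ?_, ?_⟩
  · -- qKer M ∩ Hbdry n = {[w'']}
    ext p
    simp only [Set.mem_inter_iff, Set.mem_singleton_iff]
    constructor
    · rintro ⟨hpk, hpb⟩
      obtain ⟨y, hy, hpy, hyiso⟩ := hpb
      subst hpy
      rw [mem_qKer_mk hy] at hpk
      by_cases hperp : herm n w'' y = 0
      · obtain ⟨r, _, _, himp⟩ := herm_perp hw''iso hw''ne hperp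
        obtain ⟨c, hc⟩ := himp hyiso
        have hc0 : c ≠ 0 := by
          intro h
          rw [h, zero_smul] at hc
          exact hy hc
        exact (Projectivization.mk_eq_mk_iff' ℂ _ _ hy hw''ne).2 ⟨c, hc.symm⟩
      · exfalso
        -- there is x ∈ ker B \ ker M
        obtain ⟨x, hxB, hxM⟩ : ∃ x : Vec n, B *ᵥ x = 0 ∧ M *ᵥ x ≠ 0 := by
          by_contra hno
          push_neg at hno
          have hall : ∀ v : Vec n, M *ᵥ v = 0 := by
            intro v
            set a : ℂ := (starRingEnd ℂ) (herm n w'' v / herm n w'' y) with ha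
            have hvdec : herm n w'' (v + (-a) • y) = 0 := by
              rw [herm_add_right, herm_smul_right, ha, map_neg, Complex.conj_conj]
              field_simp
              ring
            have hBz : B *ᵥ (v + (-a) • y) = 0 := (hkerB _).mpr hvdec
            have hMz : M *ᵥ (v + (-a) • y) = 0 := hno _ hBz
            have hexp : M *ᵥ v + (-a) • (M *ᵥ y) = 0 := by
              rw [← Matrix.mulVec_smul, ← Matrix.mulVec_add]
              exact hMz
            rw [hpk, smul_zero, add_zero] at hexp
            exact hexp
          apply hM
          ext i j
          have := congrFun (hall (Pi.single j 1)) i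
          rw [Matrix.mulVec_single] at this
          simpa using this
        have hx0 : x ≠ 0 := by
          intro h
          rw [h, Matrix.mulVec_zero] at hxM
          exact hxM rfl
        have hperpx : herm n w'' x = 0 := (hkerB x).mp hxB
        have hxx : herm n x x ≠ 0 := by
          obtain ⟨rx, hrx0, hrxx, himpx⟩ := herm_perp hw''iso hw''ne hperpx
          intro h0
          obtain ⟨c, hc⟩ := himpx h0
          apply hxM
          rw [hc, Matrix.mulVec_smul, hMw'', smul_zero]
        have hu0w'' : herm n u0 w'' = -(w 0) := by
          rw [herm_conj w'' u0, hw''def, hadj o u0, ← hwdef, hodef, herm_single_left]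
          simp [eps]
        set den : ℕ → ℂ := fun k => herm n u0 (ok k) with hden
        have hdenlim : Tendsto den atTop (𝓝 (-(w 0))) := by
          rw [← hu0w'']
          exact tendsto_herm tendsto_const_nhds hoklim
        have hdenne : ∀ᶠ k in atTop, den k ≠ 0 :=
          hdenlim.eventually_ne (neg_ne_zero.mpr hw0)
        set num : ℕ → ℂ := fun k => herm n x (ok k) with hnum
        have hxw'' : herm n x w'' = 0 := by
          rw [herm_conj w'' x, hperpx, map_zero]
        have hnumlim : Tendsto num atTop (𝓝 0) := by
          rw [← hxw'']
          exact tendsto_herm tendsto_const_nhds hoklim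
        set δ : ℕ → ℂ := fun k => if den k = 0 then 0 else -(num k) / den k with hδ
        have hδlim : Tendsto δ atTop (𝓝 0) := by
          have h1 : Tendsto (fun k => -(num k) / den k) atTop (𝓝 0) := by
            have h2 := (hnumlim.neg).div hdenlim (neg_ne_zero.mpr hw0)
            rw [neg_zero, zero_div] at h2
            exact h2
          refine Tendsto.congr' ?_ h1
          filter_upwards [hdenne] with k hk
          rw [hδ]
          simp only [if_neg hk]
        have hvklim0 : Tendsto (fun k => x + δ k • u0) atTop (𝓝 x) := by
          have h1 : Tendsto (fun k => δ k • u0) atTop (𝓝 ((0 : ℂ) • u0)) :=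
            hδlim.smul_const u0
          rw [zero_smul] at h1
          have h3 := (tendsto_const_nhds (x := x) (f := (atTop : Filter ℕ))).add h1
          simpa using h3
        have hvkev : ∀ᶠ k in atTop, x + δ k • u0 ≠ 0 := hvklim0.eventually_ne hx0
        set vk : ℕ → Vec n := fun k => if x + δ k • u0 = 0 then x else x + δ k • u0
          with hvk
        have hvkne : ∀ k, vk k ≠ 0 := by
          intro k
          rw [hvk]
          dsimp only
          split
          · exact hx0
          · next hne => exact hne
        have hvkeq : ∀ᶠ k in atTop, vk k = x + δ k • u0 := by
          filter_upwards [hvkev] with k hk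
          rw [hvk]
          simp only [if_neg hk]
        have hvx : Tendsto vk atTop (𝓝 x) :=
          Tendsto.congr' (hvkeq.mono fun k hk => hk.symm) hvklim0
        set tk : ℕ → Vec n := fun k => (A (φ k) : Mat n) *ᵥ (vk k) with htk
        have htkne : ∀ k, tk k ≠ 0 := fun k => gl_mulVec_ne_zero _ (hvkne k)
        have himg : ∀ᶠ k in atTop, act ((γ (φ k) : ↥G) : PGLn n)
            (Projectivization.mk ℂ (vk k) (hvkne k)) =
            Projectivization.mk ℂ (tk k) (htkne k) :=
          Filter.Eventually.of_forall fun k => hact _ _ _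
        have hZc : IsClosed {p : Pn n | ∀ j, gp p 0 j = 0} := by
          have hZeq : {p : Pn n | ∀ j, gp p 0 j = 0} =
              ⋂ j, (fun p : Pn n => gp p 0 j) ⁻¹' {0} := by
            ext q
            simp
          rw [hZeq]
          exact isClosed_iInter fun j =>
            IsClosed.preimage (continuous_gp.matrix_elem 0 j) isClosed_singleton
        have hZmem : ∀ᶠ k in atTop, Projectivization.mk ℂ (tk k) (htkne k) ∈
            {p : Pn n | ∀ j, gp p 0 j = 0} := by
          filter_upwards [hvkeq, hdenne] with k hk hdk
          have htk0 : herm n (tk k) o = 0 := by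
            have h1 : herm n (tk k) o =
                herm n (vk k) ((((A (φ k))⁻¹ : GLn n) : Mat n) *ᵥ o) := by
              conv_lhs => rw [show (o : Vec n) =
                (A (φ k) : Mat n) *ᵥ ((((A (φ k))⁻¹ : GLn n) : Mat n) *ᵥ o) from
                  (gl_cancel _ o).symm]
              exact hAu (φ k) _ _
            have h2 : (((A (φ k))⁻¹ : GLn n) : Mat n) *ᵥ o = (ci (φ k))⁻¹ • ok k := by
              show _ = (ci (φ k))⁻¹ • (Cm (φ k) *ᵥ o)
              rw [hCmv, smul_smul, inv_mul_cancel₀ (hci _), one_smul]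
            rw [h1, h2, herm_smul_right]
            have h3 : herm n (vk k) (ok k) = 0 := by
              rw [hk, herm_add_left, herm_smul_left]
              show num k + δ k * den k = 0
              rw [hδ]
              simp only [if_neg hdk]
              field_simp
              ring
            rw [h3, mul_zero]
          have htk00 : (tk k) 0 = 0 := by
            rw [hodef, herm_o_right] at htk0
            exact neg_eq_zero.mp htk0
          intro j
          rw [gp_mk, gfun_apply, htk00, zero_mul, zero_div]
        have hMxZ : Projectivization.mk ℂ (M *ᵥ x) hxM ∉
            {p : Pn n | ∀ j, gp p 0 j = 0} := by
          intro hmem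
          have h00 := hmem 0
          rw [gp_mk, gfun_apply] at h00
          obtain ⟨c2, hc2⟩ := hMr x
          have hc2ne : c2 ≠ 0 := by
            intro h
            rw [h, zero_smul] at hc2
            exact hxM hc2
          have hMx0ne : (M *ᵥ x) 0 ≠ 0 := by
            have hMx0 : (M *ᵥ x) 0 = c2 * w 0 := by
              rw [hc2]
              simp [Pi.smul_apply, smul_eq_mul]
            rw [hMx0]
            exact mul_ne_zero hc2ne hw0
          rcases div_eq_zero_iff.mp h00 with h' | h'
          · rcases mul_eq_zero.mp h' with h'' | h''
            · exact hMx0ne h''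
            · exact hMx0ne ((map_eq_zero (starRingEnd ℂ)).mp h'')
          · exact nsq_ne_zero hxM h'
        exact probe_contra M _ hconv φ hφ x hx0 hxM vk hvkne hvx tk htkne himg _
          hZc hZmem hMxZ
    · rintro rfl
      constructor
      · rw [mem_qKer_mk hw''ne]
        exact hMw''
      · exact ⟨w'', hw''ne, rfl, hw''iso⟩
  · -- [w''] is in the limit set
    refine ⟨fun k => (γ (φ k))⁻¹, ?_, ?_⟩
    · intro a b hab
      exact hφ.injective (hγ (inv_injective hab))
    · have hbase : basePt n = Projectivization.mk ℂ o ho0 := rfl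
      have hinv : ∀ k, ((((γ (φ k))⁻¹ : ↥G)) : PGLn n)
          = QuotientGroup.mk (((A (φ k))⁻¹ : GLn n)) := by
        intro k
        have h1 : ((((γ (φ k))⁻¹ : ↥G)) : PGLn n) = (((γ (φ k) : ↥G) : PGLn n))⁻¹ := rfl
        rw [h1, ← hAmk (φ k)]
        rfl
      have hact' : ∀ k, act ((((γ (φ k))⁻¹ : ↥G)) : PGLn n) (basePt n) =
          Projectivization.mk ℂ (ok k) (hokne k) := by
        intro k
        rw [hbase, hinv k, act_mk]
        refine (Projectivization.mk_eq_mk_iff' ℂ _ _ _ (hokne k)).2 ⟨(ci (φ k))⁻¹, ?_⟩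
        show (ci (φ k))⁻¹ • (Cm (φ k) *ᵥ o) = _
        rw [hCmv, smul_smul, inv_mul_cancel₀ (hci _), one_smul]
      have htend := tendsto_mk hokne hw''ne hoklim
      exact htend.congr fun k => (hact' k).symm
end

section
/- Let n ≥ 1 and let G be an infinite discrete subgroup of PU(1,n). Then the union 𝒞(G) = ⋃_{p ∈ Λ_CG(G)} 𝓗_p of all complex projective hyperplanes tangent to ∂𝐇ⁿ_ℂ at points of the Chen–Greenberg limit set is a closed G-invariant subset of ℙⁿ_ℂ. -/
open Filter Topology Matrix

section Lemmas

open Projectivization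

variable {n : ℕ}

/-! ### Basic facts about `herm` -/

lemma herm_smul (a b : ℂ) (u v : Vec n) :
    herm n (a • u) (b • v) = a * (starRingEnd ℂ) b * herm n u v := by
  simp only [herm, Pi.smul_apply, smul_eq_mul, _root_.map_mul, mul_add, Finset.mul_sum, mul_neg]
  congr 1
  · ring
  · exact Finset.sum_congr rfl fun j _ => by ring

lemma herm_continuous : Continuous fun p : Vec n × Vec n => herm n p.1 p.2 := by
  unfold herm
  refine Continuous.add (Continuous.neg (Continuous.mul ?_ ?_)) ?_
  · exact (continuous_apply 0).comp continuous_fst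
  · exact continuous_star.comp ((continuous_apply 0).comp continuous_snd)
  · refine continuous_finset_sum _ fun j _ => Continuous.mul ?_ ?_
    · exact (continuous_apply j.succ).comp continuous_fst
    · exact continuous_star.comp ((continuous_apply j.succ).comp continuous_snd)

/-- The representative of `mk v` is a nonzero multiple of `v`. -/
lemma rep_mk_eq_smul (v : Vec n) (hv : v ≠ 0) :
    ∃ c : ℂ, c ≠ 0 ∧ (Projectivization.mk ℂ v hv).rep = c • v := by
  have h := Projectivization.mk_rep (Projectivization.mk ℂ v hv)
  rw [Projectivization.mk_eq_mk_iff'] at h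
  obtain ⟨a, ha⟩ := h
  refine ⟨a, fun h0 => ?_, ha.symm⟩
  rw [h0, zero_smul] at ha
  exact (Projectivization.mk ℂ v hv).rep_nonzero ha.symm

lemma herm_rep_mk_zero_iff (v w : Vec n) (hv : v ≠ 0) (hw : w ≠ 0) :
    herm n (Projectivization.mk ℂ v hv).rep (Projectivization.mk ℂ w hw).rep = 0 ↔
      herm n v w = 0 := by
  obtain ⟨c, hc, hcv⟩ := rep_mk_eq_smul v hv
  obtain ⟨d, hd, hdw⟩ := rep_mk_eq_smul w hw
  rw [hcv, hdw, herm_smul, mul_eq_zero, mul_eq_zero]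
  have hd' : (starRingEnd ℂ) d ≠ 0 := by simpa using hd
  tauto

lemma mem_tangentAt_iff (v w : Vec n) (hv : v ≠ 0) (hw : w ≠ 0) :
    Projectivization.mk ℂ v hv ∈ tangentAt (Projectivization.mk ℂ w hw) ↔ herm n v w = 0 :=
  herm_rep_mk_zero_iff v w hv hw

end Lemmas

section Topo

open Projectivization

variable {n : ℕ}

abbrev NZ (n : ℕ) := {v : Vec n // v ≠ 0}

lemma continuous_pmk : Continuous (Projectivization.mk' ℂ : NZ n → Pn n) :=
  continuous_quotient_mk'

lemma isQuotientMap_pmk : IsQuotientMap (Projectivization.mk' ℂ : NZ n → Pn n) :=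
  isQuotientMap_quotient_mk'

lemma pmk_surjective : Function.Surjective (Projectivization.mk' ℂ : NZ n → Pn n) := by
  intro p
  exact ⟨⟨p.rep, p.rep_nonzero⟩, by simp⟩

lemma pmk_eq_iff (v w : NZ n) :
    Projectivization.mk' ℂ v = Projectivization.mk' ℂ w ↔ ∃ c : ℂ, c ≠ 0 ∧ c • w.1 = v.1 := by
  rw [mk'_eq_mk, mk'_eq_mk, Projectivization.mk_eq_mk_iff']
  constructor
  · rintro ⟨a, ha⟩
    refine ⟨a, fun h0 => ?_, ha⟩
    rw [h0, zero_smul] at ha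
    exact v.2 ha.symm
  · rintro ⟨c, _, hc⟩
    exact ⟨c, hc⟩

lemma isOpenMap_pmk : IsOpenMap (Projectivization.mk' ℂ : NZ n → Pn n) := by
  intro U hU
  rw [← isQuotientMap_pmk.isOpen_preimage]
  have : (Projectivization.mk' ℂ : NZ n → Pn n) ⁻¹' (Projectivization.mk' ℂ '' U)
      = ⋃ c : ℂˣ, (fun w : NZ n => (⟨(c : ℂ) • w.1,
          by simp [Units.smul_def, w.2]⟩ : NZ n)) ⁻¹' U := by
    ext w
    simp only [Set.mem_preimage, Set.mem_image, Set.mem_iUnion]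
    constructor
    · rintro ⟨v, hvU, hv⟩
      obtain ⟨c, hc, hcv⟩ := (pmk_eq_iff v w).mp hv
      exact ⟨Units.mk0 c hc, Set.mem_of_eq_of_mem (Subtype.ext hcv) hvU⟩
    · rintro ⟨c, hc⟩
      refine ⟨_, hc, ?_⟩
      rw [pmk_eq_iff]
      exact ⟨(c : ℂ), c.ne_zero, rfl⟩
  rw [this]
  refine isOpen_iUnion fun c => IsOpen.preimage ?_ hU
  exact Continuous.subtype_mk (continuous_smul.comp (continuous_const.prodMk continuous_subtype_val) :
      Continuous fun w : NZ n => (c : ℂ) • w.1) _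

/-- The "parallel" relation on nonzero vectors is closed. -/
lemma isClosed_parallel :
    IsClosed {vw : NZ n × NZ n | Projectivization.mk' ℂ vw.1 = Projectivization.mk' ℂ vw.2} := by
  have heq : {vw : NZ n × NZ n | Projectivization.mk' ℂ vw.1 = Projectivization.mk' ℂ vw.2}
      = ⋂ i : Fin (n+1), ⋂ j : Fin (n+1),
        {vw : NZ n × NZ n | vw.1.1 i * vw.2.1 j = vw.1.1 j * vw.2.1 i} := by
    ext ⟨v, w⟩
    simp only [Set.mem_setOf_eq, Set.mem_iInter]
    constructor
    · intro h i j
      obtain ⟨c, _, hc⟩ := (pmk_eq_iff v w).mp h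
      rw [← hc]
      simp only [Pi.smul_apply, smul_eq_mul]
      ring
    · intro h
      obtain ⟨j0, hj0⟩ : ∃ j0, w.1 j0 ≠ 0 := by
        by_contra hall
        push_neg at hall
        exact w.2 (funext hall)
      rw [pmk_eq_iff]
      refine ⟨v.1 j0 / w.1 j0, ?_, ?_⟩
      · intro h0
        have hv0 : v.1 j0 = 0 := by
          field_simp at h0
          simpa using h0
        apply v.2
        funext i
        have := h i j0
        rw [hv0] at this
        have : v.1 i * w.1 j0 = 0 := by rw [this]; ring
        rcases mul_eq_zero.mp this with h' | h'
        · exact h'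
        · exact absurd h' hj0
      · funext i
        rw [Pi.smul_apply, smul_eq_mul, div_mul_eq_mul_div, div_eq_iff hj0]
        exact h j0 i
  rw [heq]
  refine isClosed_iInter fun i => isClosed_iInter fun j => isClosed_eq ?_ ?_
  · exact Continuous.mul
      ((continuous_apply i).comp (continuous_subtype_val.comp continuous_fst))
      ((continuous_apply j).comp (continuous_subtype_val.comp continuous_snd))
  · exact Continuous.mul
      ((continuous_apply j).comp (continuous_subtype_val.comp continuous_fst))
      ((continuous_apply i).comp (continuous_subtype_val.comp continuous_snd))

instance pnT2 : T2Space (Pn n) := by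
  constructor
  intro a b hab
  obtain ⟨va, rfl⟩ := pmk_surjective a
  obtain ⟨vb, rfl⟩ := pmk_surjective b
  have hval : (va, vb) ∈ {vw : NZ n × NZ n |
      Projectivization.mk' ℂ vw.1 = Projectivization.mk' ℂ vw.2}ᶜ := hab
  obtain ⟨U, V, hU, hV, haU, hbV, hUV⟩ :=
    isOpen_prod_iff.mp isClosed_parallel.isOpen_compl va vb hval
  refine ⟨Projectivization.mk' ℂ '' U, Projectivization.mk' ℂ '' V,
    isOpenMap_pmk U hU, isOpenMap_pmk V hV, ⟨va, haU, rfl⟩, ⟨vb, hbV, rfl⟩, ?_⟩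
  rw [Set.disjoint_left]
  rintro z ⟨u, huU, rfl⟩ ⟨w, hwV, hw⟩
  exact hUV (Set.mk_mem_prod huU hwV) hw.symm

instance pnCompact : CompactSpace (Pn n) := by
  have hS : IsCompact (Metric.sphere (0 : Vec n) 1) := isCompact_sphere 0 1
  have hcont : Continuous fun v : Metric.sphere (0 : Vec n) 1 =>
      Projectivization.mk' ℂ (⟨v.1, fun h0 => by
        have := v.2
        rw [mem_sphere_iff_norm, h0] at this
        simp at this⟩ : NZ n) := by
    refine continuous_pmk.comp (Continuous.subtype_mk ?_ _)
    exact continuous_subtype_val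
  constructor
  have hrange : Set.range (fun v : Metric.sphere (0 : Vec n) 1 =>
      Projectivization.mk' ℂ (⟨v.1, fun h0 => by
        have := v.2
        rw [mem_sphere_iff_norm, h0] at this
        simp at this⟩ : NZ n)) = Set.univ := by
    rw [Set.eq_univ_iff_forall]
    intro p
    have hrep := p.rep_nonzero
    have hnorm : ‖p.rep‖ ≠ 0 := norm_ne_zero_iff.mpr hrep
    refine ⟨⟨‖p.rep‖⁻¹ • p.rep, ?_⟩, ?_⟩
    · rw [mem_sphere_iff_norm, sub_zero, norm_smul]
      simp [hnorm]
    · simp only [mk'_eq_mk]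
      conv_rhs => rw [← Projectivization.mk_rep p]
      rw [Projectivization.mk_eq_mk_iff']
      refine ⟨((‖p.rep‖⁻¹ : ℝ) : ℂ), ?_⟩
      rw [Complex.coe_smul]
  rw [← hrange]
  exact isCompact_range hcont

lemma nhds_pmk (v : NZ n) : 𝓝 (Projectivization.mk' ℂ v) = Filter.map (Projectivization.mk' ℂ) (𝓝 v) :=
  le_antisymm (isOpenMap_pmk.nhds_le v) (continuous_pmk.tendsto v)

end Topo

section PartC

open Projectivization

variable {n : ℕ}

instance pnFirstCountable : FirstCountableTopology (Pn n) := by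
  constructor
  intro p
  obtain ⟨v, rfl⟩ := pmk_surjective p
  rw [nhds_pmk]
  infer_instance

lemma lambdaCG_eq (G : Subgroup (PGLn n)) :
    LambdaCG G = ⋂ F : Finset G,
      closure ((fun g : G => act (g : PGLn n) (basePt n)) '' (↑F)ᶜ) := by
  apply Set.Subset.antisymm
  · rintro z ⟨g, hginj, hgt⟩
    rw [Set.mem_iInter]
    intro F
    refine mem_closure_of_tendsto hgt ?_
    have hfin : {m : ℕ | g m ∈ F}.Finite :=
      Set.Finite.preimage hginj.injOn F.finite_toSet
    rw [← Nat.cofinite_eq_atTop]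
    filter_upwards [hfin.eventually_cofinite_notMem] with m hm
    exact ⟨g m, hm, rfl⟩
  · intro z hz
    rw [Set.mem_iInter] at hz
    obtain ⟨s, hs⟩ := (𝓝 z).exists_antitone_basis
    set W : ℕ → Set (Pn n) := fun k => interior (s k) with hW
    have hWo : ∀ k, IsOpen (W k) := fun k => isOpen_interior
    have hWz : ∀ k, z ∈ W k := fun k =>
      mem_interior_iff_mem_nhds.mpr (hs.toHasBasis.mem_of_mem trivial)
    have hWanti : ∀ ⦃k l : ℕ⦄, k ≤ l → W l ⊆ W k := fun k l h =>
      interior_mono (hs.antitone h)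
    have key : ∀ (k : ℕ) (F : Finset G), ∃ g : G, g ∉ F ∧ act (g : PGLn n) (basePt n) ∈ W k := by
      intro k F
      have hcl := hz F
      obtain ⟨y, hyW, g, hg, rfl⟩ := _root_.mem_closure_iff.mp hcl (W k) (hWo k) (hWz k)
      exact ⟨g, hg, hyW⟩
    classical
    choose step hstep1 hstep2 using key
    let FS : ℕ → Finset G := fun k => Nat.rec ∅ (fun k F => insert (step k F) F) k
    have hFSmono : Monotone FS := monotone_nat_of_le_succ fun k => Finset.subset_insert _ _
    set g : ℕ → G := fun k => step k (FS k) with hg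
    have hmem : ∀ k, g k ∈ FS (k + 1) := fun k => Finset.mem_insert_self _ _
    have hnot : ∀ k, g k ∉ FS k := fun k => hstep1 k (FS k)
    have hginj : Function.Injective g := by
      intro a b hab
      by_contra hne
      rcases Nat.lt_or_ge a b with h | h
      · exact hnot b (hFSmono (Nat.succ_le_of_lt h) (hab ▸ hmem a))
      · have h' : b < a := lt_of_le_of_ne h (Ne.symm hne)
        exact hnot a (hFSmono (Nat.succ_le_of_lt h') (hab ▸ hmem b))
    refine ⟨g, hginj, ?_⟩
    rw [hs.toHasBasis.tendsto_right_iff]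
    intro i _
    filter_upwards [Filter.eventually_ge_atTop i] with k hk
    exact interior_subset (hWanti hk (hstep2 k (FS k)))

lemma isClosed_lambdaCG (G : Subgroup (PGLn n)) : IsClosed (LambdaCG G) := by
  rw [lambdaCG_eq]
  exact isClosed_iInter fun F => isClosed_closure

end PartC

section PartD

open Projectivization

variable {n : ℕ}

lemma gl_center_scalar {z : GLn n} (hz : z ∈ Subgroup.center (GLn n)) :
    ∃ c : ℂ, c ≠ 0 ∧ (z : Mat n) = c • (1 : Mat n) := by
  have hcomm : ∀ (i j : Fin (n + 1)), i ≠ j →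
      Commute (Matrix.single i j 1) (z : Mat n) := by
    intro i j hij
    have h1 : Matrix.transvection i j (1 : ℂ) * Matrix.transvection i j (-1) = 1 := by
      rw [Matrix.transvection_mul_transvection_same _ _ hij]
      norm_num [Matrix.transvection_zero]
    have h2 : Matrix.transvection i j (-1 : ℂ) * Matrix.transvection i j 1 = 1 := by
      rw [Matrix.transvection_mul_transvection_same _ _ hij]
      norm_num [Matrix.transvection_zero]
    have hU := Subgroup.mem_center_iff.mp hz
      (⟨Matrix.transvection i j 1, Matrix.transvection i j (-1), h1, h2⟩ : GLn n)
    have hm : Matrix.transvection i j (1 : ℂ) * (z : Mat n)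
        = (z : Mat n) * Matrix.transvection i j 1 := congrArg Units.val hU
    have hm' : (z : Mat n) + Matrix.single i j 1 * (z : Mat n)
        = (z : Mat n) + (z : Mat n) * Matrix.single i j 1 := by
      rwa [Matrix.transvection, add_mul, mul_add, one_mul, mul_one] at hm
    exact add_left_cancel hm'
  obtain ⟨c, hc⟩ := Matrix.mem_range_scalar_of_commute_single hcomm
  refine ⟨c, ?_, ?_⟩
  · intro h0
    have hz0 : (z : Mat n) = 0 := by
      rw [← hc, h0]
      ext i j
      simp [Matrix.scalar_apply]
    have h1 : (z : Mat n) * ((z⁻¹ : GLn n) : Mat n) = 1 := z.val_inv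
    rw [hz0, zero_mul] at h1
    have := congrFun (congrFun h1 0) 0
    simp [Matrix.one_apply] at this
  · rw [← hc]
    ext i j
    simp [Matrix.scalar_apply, Matrix.smul_apply, Matrix.one_apply, Matrix.diagonal_apply]

lemma mulVec_ne_zero (A : GLn n) {v : Vec n} (hv : v ≠ 0) : (A : Mat n) *ᵥ v ≠ 0 := by
  intro h
  apply hv
  apply glInj A
  simpa [Matrix.mulVecLin_apply] using h

lemma actGL_mk (A : GLn n) (v : Vec n) (hv : v ≠ 0) :
    actGL A (Projectivization.mk ℂ v hv)
      = Projectivization.mk ℂ ((A : Mat n) *ᵥ v) (mulVec_ne_zero A hv) := by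
  unfold actGL
  rw [Projectivization.map_mk]
  rfl

lemma actGL_comp (A B : GLn n) : actGL (A * B) = actGL A ∘ actGL B := by
  funext p
  obtain ⟨v, rfl⟩ := pmk_surjective p
  simp only [mk'_eq_mk, Function.comp_apply, actGL_mk]
  congr 1
  rw [Units.val_mul, ← Matrix.mulVec_mulVec]

lemma actGL_one : actGL (1 : GLn n) = id := by
  funext p
  obtain ⟨v, rfl⟩ := pmk_surjective p
  simp only [mk'_eq_mk, actGL_mk, id]
  congr 1
  simp

lemma actGL_center {z : GLn n} (hz : z ∈ Subgroup.center (GLn n)) : actGL z = id := by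
  obtain ⟨c, hc, hzc⟩ := gl_center_scalar hz
  funext p
  obtain ⟨v, rfl⟩ := pmk_surjective p
  simp only [mk'_eq_mk, actGL_mk, id]
  rw [Projectivization.mk_eq_mk_iff']
  refine ⟨c, ?_⟩
  rw [hzc, Matrix.smul_mulVec, Matrix.one_mulVec]

lemma act_eq_actGL_of_mk {A : GLn n} {g : PGLn n} (h : QuotientGroup.mk A = g) :
    act g = actGL A := by
  have hout : QuotientGroup.mk (Quotient.out g) = g := QuotientGroup.out_eq' g
  have hz : A⁻¹ * Quotient.out g ∈ Subgroup.center (GLn n) :=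
    QuotientGroup.eq.mp (h.trans hout.symm)
  have hAg : Quotient.out g = A * (A⁻¹ * Quotient.out g) := by
    rw [← mul_assoc, mul_inv_cancel, one_mul]
  show actGL (Quotient.out g) = actGL A
  rw [hAg, actGL_comp, actGL_center hz]
  rfl

lemma act_mul (g h : PGLn n) : act (g * h) = act g ∘ act h := by
  have h1 : QuotientGroup.mk (Quotient.out g * Quotient.out h) = g * h := by
    rw [QuotientGroup.mk_mul, QuotientGroup.out_eq', QuotientGroup.out_eq']
  rw [act_eq_actGL_of_mk h1, actGL_comp]
  rfl

lemma act_one : act (1 : PGLn n) = id := by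
  have h1 : QuotientGroup.mk (1 : GLn n) = (1 : PGLn n) := QuotientGroup.mk_one _
  rw [act_eq_actGL_of_mk h1, actGL_one]

lemma actGL_continuous (A : GLn n) : Continuous (actGL A) := by
  rw [isQuotientMap_pmk.continuous_iff]
  have heq : (actGL A) ∘ (Projectivization.mk' ℂ) = fun v : NZ n =>
      Projectivization.mk' ℂ ⟨(A : Mat n) *ᵥ v.1, mulVec_ne_zero A v.2⟩ := by
    funext v
    simp only [Function.comp_apply, mk'_eq_mk, actGL_mk]
  rw [heq]
  refine continuous_pmk.comp (Continuous.subtype_mk ?_ _)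
  have : Continuous fun w : Vec n => (A : Mat n) *ᵥ w :=
    (Matrix.mulVecLin (A : Mat n)).continuous_of_finiteDimensional
  exact this.comp continuous_subtype_val

lemma act_continuous (g : PGLn n) : Continuous (act g) :=
  actGL_continuous (Quotient.out g)

lemma unitary_inv_mem {B : GLn n} (hB : B ∈ unitaryGL n) : B⁻¹ ∈ unitaryGL n := by
  intro u v
  have := hB (((B⁻¹ : GLn n) : Mat n) *ᵥ u) (((B⁻¹ : GLn n) : Mat n) *ᵥ v)
  rw [Matrix.mulVec_mulVec, Matrix.mulVec_mulVec, Units.mul_inv, Matrix.one_mulVec,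
    Matrix.one_mulVec] at this
  exact this.symm

lemma actGL_tangent {B : GLn n} (hB : B ∈ unitaryGL n) (p q : Pn n) :
    actGL B q ∈ tangentAt (actGL B p) ↔ q ∈ tangentAt p := by
  conv_lhs => rw [← Projectivization.mk_rep q, ← Projectivization.mk_rep p, actGL_mk, actGL_mk]
  conv_rhs => rw [← Projectivization.mk_rep q, ← Projectivization.mk_rep p]
  rw [mem_tangentAt_iff, mem_tangentAt_iff, hB]

lemma actGL_image_tangent {B : GLn n} (hB : B ∈ unitaryGL n) (p : Pn n) :
    actGL B '' tangentAt p = tangentAt (actGL B p) := by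
  have hid : actGL B ∘ actGL B⁻¹ = id := by
    rw [← actGL_comp, mul_inv_cancel, actGL_one]
  ext q'
  constructor
  · rintro ⟨q, hq, rfl⟩
    exact (actGL_tangent hB p q).mpr hq
  · intro hq'
    refine ⟨actGL B⁻¹ q', ?_, congrFun hid q'⟩
    rw [← actGL_tangent hB p, show actGL B (actGL B⁻¹ q') = q' from congrFun hid q']
    exact hq'

end PartD

section PartE

open Projectivization

variable {n : ℕ}

lemma act_image_lambda_subset (G : Subgroup (PGLn n)) (h : G) :
    act (h : PGLn n) '' LambdaCG G ⊆ LambdaCG G := by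
  rintro _ ⟨z, ⟨u, huinj, hut⟩, rfl⟩
  refine ⟨fun m => h * u m, fun a b hab => huinj (mul_left_cancel hab), ?_⟩
  have heq : ∀ m : ℕ, act (((h * u m : G) : PGLn n)) (basePt n)
      = act (h : PGLn n) (act ((u m : G) : PGLn n) (basePt n)) := by
    intro m
    have : ((h * u m : G) : PGLn n) = (h : PGLn n) * ((u m : G) : PGLn n) := rfl
    rw [this, act_mul]
    rfl
  have htend : Filter.Tendsto (fun m => act (h : PGLn n) (act ((u m : G) : PGLn n) (basePt n)))
      atTop (𝓝 (act (h : PGLn n) z)) :=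
    ((act_continuous (h : PGLn n)).tendsto z).comp hut
  exact htend.congr (fun m => (heq m).symm)

lemma act_image_lambda (G : Subgroup (PGLn n)) (g : G) :
    act (g : PGLn n) '' LambdaCG G = LambdaCG G := by
  apply Set.Subset.antisymm (act_image_lambda_subset G g)
  intro z hz
  have h1 : act ((g⁻¹ : G) : PGLn n) z ∈ LambdaCG G :=
    act_image_lambda_subset G g⁻¹ ⟨z, hz, rfl⟩
  refine ⟨act ((g⁻¹ : G) : PGLn n) z, h1, ?_⟩
  have hid : act (g : PGLn n) ∘ act ((g⁻¹ : G) : PGLn n) = id := by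
    rw [← act_mul]
    have hmul : (g : PGLn n) * ((g⁻¹ : G) : PGLn n) = 1 := by
      rw [show ((g⁻¹ : G) : PGLn n) = (g : PGLn n)⁻¹ from rfl, mul_inv_cancel]
    rw [hmul, act_one]
  exact congrFun hid z

theorem union_tangent_hyperplanes_closed_invariant'
    (n : ℕ) (hn : 1 ≤ n) (G : Subgroup (PGLn n))
    (hPU : (G : Set (PGLn n)) ⊆ PUset n) (hdisc : DiscreteTopology ↥G)
    (hinf : (G : Set (PGLn n)).Infinite) :
    IsClosed (⋃ p ∈ LambdaCG G, tangentAt p) ∧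
    ∀ g : G, act (g : PGLn n) '' (⋃ p ∈ LambdaCG G, tangentAt p)
      = ⋃ p ∈ LambdaCG G, tangentAt p := by
  have hΛclosed : IsClosed (LambdaCG G) := isClosed_lambdaCG G
  constructor
  · -- closedness
    have hZ : IsClosed {qp : Pn n × Pn n | herm n qp.1.rep qp.2.rep = 0} := by
      have hqm : IsQuotientMap
          (Prod.map (Projectivization.mk' ℂ) (Projectivization.mk' ℂ) :
            NZ n × NZ n → Pn n × Pn n) :=
        (isOpenMap_pmk.prodMap isOpenMap_pmk).isQuotientMap
          (continuous_pmk.prodMap continuous_pmk)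
          (pmk_surjective.prodMap pmk_surjective)
      rw [← hqm.isClosed_preimage]
      have hpre : Prod.map (Projectivization.mk' ℂ) (Projectivization.mk' ℂ) ⁻¹'
          {qp : Pn n × Pn n | herm n qp.1.rep qp.2.rep = 0}
          = {vw : NZ n × NZ n | herm n vw.1.1 vw.2.1 = 0} := by
        ext ⟨v, w⟩
        simp only [Set.mem_preimage, Prod.map, Set.mem_setOf_eq, mk'_eq_mk]
        exact herm_rep_mk_zero_iff v.1 w.1 v.2 w.2
      rw [hpre]
      exact isClosed_eq
        (herm_continuous.comp
          ((continuous_subtype_val.comp continuous_fst).prodMk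
            (continuous_subtype_val.comp continuous_snd)))
        continuous_const
    have hC : (⋃ p ∈ LambdaCG G, tangentAt p)
        = Prod.fst '' ({qp : Pn n × Pn n | herm n qp.1.rep qp.2.rep = 0}
            ∩ Set.univ ×ˢ LambdaCG G) := by
      ext q
      simp only [Set.mem_iUnion, Set.mem_image, Set.mem_inter_iff, Set.mem_setOf_eq,
        Set.mem_prod, Set.mem_univ, true_and]
      constructor
      · rintro ⟨p, hp, hq⟩
        exact ⟨(q, p), ⟨hq, hp⟩, rfl⟩
      · rintro ⟨⟨q', p⟩, ⟨hherm, hp⟩, rfl⟩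
        exact ⟨p, hp, hherm⟩
    rw [hC]
    have hcomp : IsCompact ({qp : Pn n × Pn n | herm n qp.1.rep qp.2.rep = 0}
        ∩ Set.univ ×ˢ LambdaCG G) :=
      (hZ.inter (isClosed_univ.prod hΛclosed)).isCompact
    exact (hcomp.image continuous_fst).isClosed
  · -- invariance
    intro g
    obtain ⟨B, hB, hmkB⟩ := hPU g.2
    have hact : act (g : PGLn n) = actGL B := act_eq_actGL_of_mk hmkB
    rw [Set.image_iUnion₂]
    ext q
    simp only [Set.mem_iUnion]
    constructor
    · rintro ⟨p, hp, hq⟩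
      rw [hact, actGL_image_tangent hB] at hq
      refine ⟨actGL B p, ?_, hq⟩
      rw [← hact]
      exact act_image_lambda_subset G g ⟨p, hp, rfl⟩
    · rintro ⟨p, hp, hq⟩
      have hp' : act ((g⁻¹ : G) : PGLn n) p ∈ LambdaCG G :=
        act_image_lambda_subset G g⁻¹ ⟨p, hp, rfl⟩
      refine ⟨act ((g⁻¹ : G) : PGLn n) p, hp', ?_⟩
      rw [hact, actGL_image_tangent hB]
      have hid : act (g : PGLn n) (act ((g⁻¹ : G) : PGLn n) p) = p := by
        have h2 : act (g : PGLn n) ∘ act ((g⁻¹ : G) : PGLn n) = id := by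
          rw [← act_mul, show ((g⁻¹ : G) : PGLn n) = (g : PGLn n)⁻¹ from rfl,
            mul_inv_cancel, act_one]
        exact congrFun h2 p
      rw [← hact, hid]
      exact hq

end PartE


/-- For an infinite discrete subgroup `G` of `PU(1,n)`, the union of
all complex projective hyperplanes tangent to `∂𝐇ⁿ_ℂ` at points of the Chen–Greenberg
limit set is a closed `G`-invariant subset of `ℙⁿ_ℂ`. -/
theorem union_tangent_hyperplanes_closed_invariant
    (n : ℕ) (hn : 1 ≤ n) (G : Subgroup (PGLn n))
    (hPU : (G : Set (PGLn n)) ⊆ PUset n) (hdisc : DiscreteTopology ↥G)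
    (hinf : (G : Set (PGLn n)).Infinite) :
    IsClosed (⋃ p ∈ LambdaCG G, tangentAt p) ∧
    ∀ g : G, act (g : PGLn n) '' (⋃ p ∈ LambdaCG G, tangentAt p)
      = ⋃ p ∈ LambdaCG G, tangentAt p := by
  exact union_tangent_hyperplanes_closed_invariant' n hn G hPU hdisc hinf
end
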